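/- arXiv:2003.01192 — 4 statements merged into one kernel-verified Lean document; each statement's English description precedes it below -/
import Mathlib

section
/- Let $H\in(1/2,1)$, $p+H>0$, and define $C_{p,H}(\tau):=e^{-\tau(p+H)} f_{p,H}(1,e^\tau)/f_{p,H}(1,1)$ for $\tau\ge 0$. Then there is a constant $c=c(p,H)<\infty$ such that $C_{p,H}(\tau)\le c\,\max(\tau e^{-\tau(p+H)}, e^{-\tau(1-H)})$ for all $\tau\ge 0$; in particular $\int_0^\infty C_{p,H}(\tau)\,d\tau<\infty$. -/
open MeasureTheory Real Set
open scoped ENNReal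

/-- `f_{p,H}(a,b) = ∫_0^a ∫_0^b x^p y^p |x-y|^{2H-2} dx dy` as a Lebesgue integral. -/
noncomputable def fPH (p H a b : ℝ) : ℝ≥0∞ :=
  ∫⁻ x in Ioo (0:ℝ) a, ∫⁻ y in Ioo (0:ℝ) b,
    ENNReal.ofReal (x ^ p * y ^ p * |x - y| ^ (2 * H - 2))

/-- `ψ_α(x) = ∫_1^x y^α dy`. -/
noncomputable def psi (α x : ℝ) : ℝ := ∫ y in (1:ℝ)..x, y ^ α
-- L2a: lintegral of rpow on Ioo 0 c
lemma lint_rpow_Ioo (r c : ℝ) (hr : -1 < r) (hc : 0 < c) :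
    ∫⁻ x in Ioo (0:ℝ) c, ENNReal.ofReal (x ^ r) = ENNReal.ofReal (c ^ (r+1) / (r+1)) := by
  have hint : IntegrableOn (fun x : ℝ => x ^ r) (Ioo (0:ℝ) c) :=
    (intervalIntegral.integrableOn_Ioo_rpow_iff hc).2 hr
  rw [← MeasureTheory.ofReal_integral_eq_lintegral_ofReal hint ?nn]
  case nn =>
    filter_upwards [ae_restrict_mem measurableSet_Ioo] with x hx
    exact rpow_nonneg hx.1.le _
  congr 1
  have : ∫ x in Ioo (0:ℝ) c, x ^ r = ∫ x in (0:ℝ)..c, x ^ r := by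
    rw [intervalIntegral.integral_of_le hc.le, integral_Ioc_eq_integral_Ioo]
  rw [this, integral_rpow (Or.inl hr), Real.zero_rpow (by linarith)]
  ring

lemma lint_shift (f : ℝ → ℝ≥0∞) (x a b : ℝ) :
    ∫⁻ y in Ioo a b, f (y - x) = ∫⁻ u in Ioo (a-x) (b-x), f u := by
  have hmp : MeasurePreserving (fun y : ℝ => y - x) volume volume :=
    ⟨measurable_id.sub_const x, by
      simpa [sub_eq_add_neg] using map_add_right_eq_self (volume : Measure ℝ) (-x)⟩
  have hemb : MeasurableEmbedding (fun y : ℝ => y - x) := by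
    simpa [sub_eq_add_neg] using (MeasurableEquiv.addRight (-x)).measurableEmbedding
  have h := hmp.setLIntegral_comp_preimage_emb hemb f (Ioo (a-x) (b-x))
  have hpre : (fun y:ℝ => y - x) ⁻¹' (Ioo (a-x) (b-x)) = Ioo a b := by
    ext y; simp only [mem_preimage, mem_Ioo]; constructor <;> rintro ⟨h1, h2⟩ <;>
      constructor <;> linarith
  rwa [hpre] at h

lemma lint_neg (f : ℝ → ℝ≥0∞) (a b : ℝ) :
    ∫⁻ u in Ioo a b, f (-u) = ∫⁻ u in Ioo (-b) (-a), f u := by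
  have hmp : MeasurePreserving (fun y : ℝ => -y) volume volume :=
    Measure.measurePreserving_neg _
  have hemb : MeasurableEmbedding (fun y : ℝ => -y) :=
    (MeasurableEquiv.neg ℝ).measurableEmbedding
  have h := hmp.setLIntegral_comp_preimage_emb hemb f (Ioo (-b) (-a))
  have hpre : (fun y:ℝ => -y) ⁻¹' (Ioo (-b) (-a)) = Ioo a b := by
    ext y; simp only [mem_preimage, mem_Ioo]; constructor <;> rintro ⟨h1, h2⟩ <;>
      constructor <;> linarith
  rwa [hpre] at h

lemma lint_abs_rpow (r s : ℝ) (hr : -1 < r) (hs : 0 < s) :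
    ∫⁻ u in Ioo (-s) s, ENNReal.ofReal (|u| ^ r)
      ≤ 2 * ENNReal.ofReal (s^(r+1)/(r+1)) := by
  have key : ∫⁻ u in Ioo (0:ℝ) s, ENNReal.ofReal (|u| ^ r)
      = ENNReal.ofReal (s^(r+1)/(r+1)) := by
    rw [← lint_rpow_Ioo r s hr hs]
    refine setLIntegral_congr_fun measurableSet_Ioo ?_
    exact fun u hu => by rw [abs_of_pos hu.1]
  have hneg : ∫⁻ u in Ioo (-s) (0:ℝ), ENNReal.ofReal (|u| ^ r)
      = ∫⁻ u in Ioo (0:ℝ) s, ENNReal.ofReal (|u| ^ r) := by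
    have h := lint_neg (fun u => ENNReal.ofReal (|u| ^ r)) (-s) 0
    simp only [abs_neg] at h
    rw [h, neg_zero, neg_neg]
  calc ∫⁻ u in Ioo (-s) s, ENNReal.ofReal (|u| ^ r)
      ≤ ∫⁻ u in Ioo (-s) 0 ∪ Ico 0 s, ENNReal.ofReal (|u| ^ r) := by
        refine lintegral_mono_set fun u hu => ?_
        rcases lt_or_ge u 0 with h | h
        · exact Or.inl ⟨hu.1, h⟩
        · exact Or.inr ⟨h, hu.2⟩
    _ ≤ (∫⁻ u in Ioo (-s) 0, ENNReal.ofReal (|u| ^ r))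
        + ∫⁻ u in Ico 0 s, ENNReal.ofReal (|u| ^ r) := lintegral_union_le _ _ _
    _ = (∫⁻ u in Ioo (0:ℝ) s, ENNReal.ofReal (|u| ^ r))
        + ∫⁻ u in Ioo (0:ℝ) s, ENNReal.ofReal (|u| ^ r) := by
        rw [hneg, setLIntegral_congr (Ioo_ae_eq_Ico (a := (0:ℝ)) (b := s)).symm]
    _ = 2 * ENNReal.ofReal (s^(r+1)/(r+1)) := by rw [key, two_mul]

lemma lint_rpow_Ico (r a b : ℝ) (ha : 0 < a) (hab : a ≤ b) :
    ∫⁻ y in Ico a b, ENNReal.ofReal (y ^ r) = ENNReal.ofReal (∫ y in Ioo a b, y ^ r) := by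
  have hii : IntervalIntegrable (fun y : ℝ => y ^ r) volume a b :=
    intervalIntegral.intervalIntegrable_rpow (Or.inr (notMem_uIcc_of_lt ha (lt_of_lt_of_le ha hab)))
  have hint : IntegrableOn (fun y : ℝ => y ^ r) (Ioo a b) := by
    rw [intervalIntegrable_iff_integrableOn_Ioo_of_le hab] at hii
    exact hii
  rw [setLIntegral_congr (Ioo_ae_eq_Ico (a := a) (b := b)).symm,
    ← MeasureTheory.ofReal_integral_eq_lintegral_ofReal hint ?_]
  filter_upwards [ae_restrict_mem measurableSet_Ioo] with y hy
  exact rpow_nonneg (le_of_lt (lt_trans ha hy.1)) _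

lemma real_int_rpow (r a b : ℝ) (ha : 0 < a) (hab : a ≤ b) (hr : r ≠ -1) :
    ∫ y in Ioo a b, y ^ r = (b ^ (r+1) - a ^ (r+1)) / (r+1) := by
  rw [← integral_Ioc_eq_integral_Ioo, ← intervalIntegral.integral_of_le hab,
    integral_rpow (Or.inr ⟨hr, notMem_uIcc_of_lt ha (lt_of_lt_of_le ha hab)⟩)]

lemma tail_neg (r a b : ℝ) (ha : 0 < a) (hr : r < -1) :
    ∫⁻ y in Ico a b, ENNReal.ofReal (y ^ r) ≤ ENNReal.ofReal (a^(r+1) / (-(r+1))) := by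
  rcases le_or_gt a b with hab | hab
  · rw [lint_rpow_Ico r a b ha hab, real_int_rpow r a b ha hab (by linarith)]
    apply ENNReal.ofReal_le_ofReal
    have hb' : 0 ≤ b ^ (r+1) := rpow_nonneg (le_of_lt (lt_of_lt_of_le ha hab)) _
    have heq : (b ^ (r+1) - a ^ (r+1)) / (r+1) = (a^(r+1) - b^(r+1)) / (-(r+1)) := by
      rw [div_neg, ← neg_div, neg_sub]
    rw [heq]
    gcongr
    · linarith
    · linarith
  · rw [Ico_eq_empty (not_lt.mpr hab.le), Measure.restrict_empty, lintegral_zero_measure]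
    exact zero_le

lemma tail_log (a b : ℝ) (ha : 1 ≤ a) :
    ∫⁻ y in Ico a b, ENNReal.ofReal (y ^ (-1:ℝ)) ≤ ENNReal.ofReal (Real.log b) := by
  rcases le_or_gt a b with hab | hab
  · rw [lint_rpow_Ico (-1) a b (by linarith) hab]
    apply ENNReal.ofReal_le_ofReal
    have h1 : ∫ y in Ioo a b, y ^ (-1:ℝ) = ∫ y in Ioo a b, y⁻¹ := by
      refine setIntegral_congr_fun measurableSet_Ioo fun y hy => ?_
      exact Real.rpow_neg_one y
    rw [h1, ← integral_Ioc_eq_integral_Ioo, ← intervalIntegral.integral_of_le hab,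
      integral_inv (notMem_uIcc_of_lt (by linarith) (by linarith)),
      Real.log_div (by linarith) (by linarith)]
    have := Real.log_nonneg ha
    linarith
  · rw [Ico_eq_empty (not_lt.mpr hab.le), Measure.restrict_empty, lintegral_zero_measure]
    exact zero_le

lemma kernel_meas (p H : ℝ) :
    Measurable (fun z : ℝ × ℝ =>
      ENNReal.ofReal (z.1 ^ p * z.2 ^ p * |z.1 - z.2| ^ (2*H-2))) := by
  fun_prop

lemma inner_meas (p H : ℝ) (s : Set ℝ) :
    Measurable (fun x : ℝ => ∫⁻ y in s,
      ENNReal.ofReal (x ^ p * y ^ p * |x - y| ^ (2*H-2))) :=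
  Measurable.lintegral_prod_right' (kernel_meas p H)

lemma piece_A (p H x : ℝ) (hH1 : 1/2 < H) (hH2 : H < 1) (hpH : 0 < p + H)
    (hx0 : 0 < x) :
    ∫⁻ y in Ioo (0:ℝ) (x/2), ENNReal.ofReal (x ^ p * y ^ p * |x - y| ^ (2*H-2))
      ≤ ENNReal.ofReal (((1/2:ℝ)^(2*H-2) * ((1/2:ℝ)^(p+1) / (p+1))) * x^(2*p+2*H-1)) := by
  have hp1 : -1 < p := by linarith
  have hHb : 2*H - 2 ≤ 0 := by linarith
  have hx2 : 0 < x/2 := by linarith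
  calc ∫⁻ y in Ioo (0:ℝ) (x/2), ENNReal.ofReal (x ^ p * y ^ p * |x - y| ^ (2*H-2))
      ≤ ∫⁻ y in Ioo (0:ℝ) (x/2), ENNReal.ofReal ((x ^ p * (x/2) ^ (2*H-2)) * y ^ p) := by
        refine setLIntegral_mono' measurableSet_Ioo fun y hy => ENNReal.ofReal_le_ofReal ?_
        have hy0 : 0 < y := hy.1
        have habs : x/2 ≤ |x - y| := by
          rw [abs_of_pos (by linarith [hy.2] : 0 < x - y)]; linarith [hy.2]
        have h1 : |x-y| ^ (2*H-2) ≤ (x/2) ^ (2*H-2) :=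
          rpow_le_rpow_of_nonpos hx2 habs hHb
        calc x^p*y^p*|x-y|^(2*H-2) ≤ x^p*y^p*((x/2)^(2*H-2)) :=
              mul_le_mul_of_nonneg_left h1
                (mul_nonneg (rpow_nonneg hx0.le _) (rpow_nonneg hy0.le _))
          _ = (x^p * (x/2)^(2*H-2)) * y^p := by ring
    _ = ENNReal.ofReal (x^p * (x/2)^(2*H-2)) * ENNReal.ofReal ((x/2)^(p+1)/(p+1)) := by
        simp_rw [ENNReal.ofReal_mul
          (mul_nonneg (rpow_nonneg hx0.le _) (rpow_nonneg hx2.le _))]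
        rw [lintegral_const_mul' _ _ ENNReal.ofReal_ne_top,
          lint_rpow_Ioo p (x/2) hp1 hx2]
    _ = ENNReal.ofReal (((1/2:ℝ)^(2*H-2) * ((1/2:ℝ)^(p+1) / (p+1))) * x^(2*p+2*H-1)) := by
        rw [← ENNReal.ofReal_mul
          (mul_nonneg (rpow_nonneg hx0.le _) (rpow_nonneg hx2.le _))]
        congr 1
        rw [show x/2 = x * (1/2) by ring, Real.mul_rpow hx0.le (by norm_num),
          Real.mul_rpow hx0.le (by norm_num),
          show ((1/2:ℝ)^(2*H-2) * ((1/2:ℝ)^(p+1) / (p+1))) * x^(2*p+2*H-1)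
            = ((1/2:ℝ)^(2*H-2) * ((1/2:ℝ)^(p+1) / (p+1))) * (x^p * x^(2*H-2) * x^(p+1)) by
          rw [← Real.rpow_add hx0, ← Real.rpow_add hx0]; congr 1; ring]
        ring

lemma piece_B (p H x : ℝ) (hH1 : 1/2 < H) (hH2 : H < 1) (hpH : 0 < p + H)
    (hx0 : 0 < x) :
    ∫⁻ y in Ico (x/2) (2*x), ENNReal.ofReal (x ^ p * y ^ p * |x - y| ^ (2*H-2))
      ≤ ENNReal.ofReal ((((1/2:ℝ)^p + (2:ℝ)^p) * (2 * ((2:ℝ)^(2*H-1) / (2*H-1))))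
          * x^(2*p+2*H-1)) := by
  have hHa : -1 < 2*H - 2 := by linarith
  have h2H1 : 0 < 2*H-1 := by linarith
  have hx2 : 0 < x/2 := by linarith
  have h2x : 0 < 2*x := by linarith
  have hcB : 0 ≤ x^p * ((x/2)^p + (2*x)^p) :=
    mul_nonneg (rpow_nonneg hx0.le _)
      (add_nonneg (rpow_nonneg hx2.le _) (rpow_nonneg h2x.le _))
  calc ∫⁻ y in Ico (x/2) (2*x), ENNReal.ofReal (x ^ p * y ^ p * |x - y| ^ (2*H-2))
      ≤ ∫⁻ y in Ico (x/2) (2*x),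
          ENNReal.ofReal ((x^p * ((x/2)^p + (2*x)^p)) * |y - x| ^ (2*H-2)) := by
        refine setLIntegral_mono' measurableSet_Ico fun y hy => ENNReal.ofReal_le_ofReal ?_
        have hy0 : 0 < y := lt_of_lt_of_le hx2 hy.1
        have hyp : y ^ p ≤ (x/2)^p + (2*x)^p := by
          rcases le_or_gt 0 p with hp | hp
          · have := Real.rpow_le_rpow hy0.le hy.2.le hp
            have h0 : (0:ℝ) ≤ (x/2)^p := rpow_nonneg hx2.le _
            linarith
          · have := rpow_le_rpow_of_nonpos hx2 hy.1 hp.le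
            have h0 : (0:ℝ) ≤ (2*x)^p := rpow_nonneg h2x.le _
            linarith
        rw [abs_sub_comm]
        calc x^p * y^p * |y-x|^(2*H-2)
            ≤ x^p * ((x/2)^p + (2*x)^p) * |y-x|^(2*H-2) := by
              apply mul_le_mul_of_nonneg_right _ (rpow_nonneg (abs_nonneg _) _)
              exact mul_le_mul_of_nonneg_left hyp (rpow_nonneg hx0.le _)
          _ = (x^p * ((x/2)^p + (2*x)^p)) * |y - x| ^ (2*H-2) := by ring
    _ ≤ ∫⁻ y in Ioo (x - 2*x) (x + 2*x),
          ENNReal.ofReal ((x^p * ((x/2)^p + (2*x)^p)) * |y - x| ^ (2*H-2)) := by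
        refine lintegral_mono_set fun y hy => ?_
        constructor
        · linarith [hy.1]
        · linarith [hy.2]
    _ = ENNReal.ofReal (x^p * ((x/2)^p + (2*x)^p))
          * ∫⁻ u in Ioo (-(2*x)) (2*x), ENNReal.ofReal (|u| ^ (2*H-2)) := by
        simp_rw [ENNReal.ofReal_mul hcB]
        rw [lintegral_const_mul' _ _ ENNReal.ofReal_ne_top]
        congr 1
        have h := lint_shift (fun u => ENNReal.ofReal (|u| ^ (2*H-2))) x (x - 2*x) (x + 2*x)
        rw [show x - 2*x - x = -(2*x) by ring, show x + 2*x - x = 2*x by ring] at h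
        exact h
    _ ≤ ENNReal.ofReal (x^p * ((x/2)^p + (2*x)^p))
          * (2 * ENNReal.ofReal ((2*x)^(2*H-1) / (2*H-1))) := by
        exact mul_le_mul_right (by
          have := lint_abs_rpow (2*H-2) (2*x) hHa h2x
          rw [show 2*H-2+1 = 2*H-1 by ring] at this
          exact this) _
    _ = ENNReal.ofReal ((((1/2:ℝ)^p + (2:ℝ)^p) * (2 * ((2:ℝ)^(2*H-1) / (2*H-1))))
          * x^(2*p+2*H-1)) := by
        rw [show (2:ℝ≥0∞) = ENNReal.ofReal (2:ℝ) by simp,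
          ← ENNReal.ofReal_mul (by norm_num),
          ← ENNReal.ofReal_mul hcB]
        congr 1
        rw [show x/2 = x * (1/2) by ring, show 2*x = x * 2 by ring,
          Real.mul_rpow hx0.le (by norm_num : (0:ℝ) ≤ 1/2),
          Real.mul_rpow hx0.le (by norm_num : (0:ℝ) ≤ 2),
          Real.mul_rpow hx0.le (by norm_num : (0:ℝ) ≤ 2),
          show (((1/2:ℝ)^p + (2:ℝ)^p) * (2 * ((2:ℝ)^(2*H-1) / (2*H-1)))) * x^(2*p+2*H-1)
            = (((1/2:ℝ)^p + (2:ℝ)^p) * (2 * ((2:ℝ)^(2*H-1) / (2*H-1))))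
              * (x^p * x^p * x^(2*H-1)) by
            rw [← Real.rpow_add hx0, ← Real.rpow_add hx0]; congr 1; ring]
        ring

lemma piece_C (p H x : ℝ) (hH1 : 1/2 < H) (hH2 : H < 1) (hpH : 0 < p + H)
    (hx0 : 0 < x) :
    ∫⁻ y in Ico (2*x) (2:ℝ), ENNReal.ofReal (x ^ p * y ^ p * |x - y| ^ (2*H-2))
      ≤ ENNReal.ofReal ((((2:ℝ)^(2-2*H) * (2:ℝ)^((p+2*H-2) - min (p+2*H-2) (-1-(p+1)/2)))
          * ((2:ℝ)^(min (p+2*H-2) (-1-(p+1)/2) + 1) / (-(min (p+2*H-2) (-1-(p+1)/2) + 1))))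
          * x ^ (p + (min (p+2*H-2) (-1-(p+1)/2) + 1))) := by
  set β := min (p+2*H-2) (-1-(p+1)/2) with hβdef
  have hp1 : -1 < p := by linarith
  have hHb : 2*H - 2 ≤ 0 := by linarith
  have hβ : β < -1 := lt_of_le_of_lt (min_le_right _ _) (by linarith)
  have hβα : β ≤ p + 2*H - 2 := min_le_left _ _
  have h2x : 0 < 2*x := by linarith
  have hcC : 0 ≤ x^p * ((2:ℝ)^(2-2*H) * (2:ℝ)^((p+2*H-2) - β)) :=
    mul_nonneg (rpow_nonneg hx0.le _)
      (mul_nonneg (rpow_nonneg (by norm_num) _) (rpow_nonneg (by norm_num) _))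
  calc ∫⁻ y in Ico (2*x) (2:ℝ), ENNReal.ofReal (x ^ p * y ^ p * |x - y| ^ (2*H-2))
      ≤ ∫⁻ y in Ico (2*x) (2:ℝ),
          ENNReal.ofReal ((x^p * ((2:ℝ)^(2-2*H) * (2:ℝ)^((p+2*H-2) - β))) * y ^ β) := by
        refine setLIntegral_mono' measurableSet_Ico fun y hy => ENNReal.ofReal_le_ofReal ?_
        have hy0 : 0 < y := lt_of_lt_of_le h2x hy.1
        have hy2 : y/2 > 0 := by linarith
        -- |x - y| ≥ y/2
        have habs : y/2 ≤ |x - y| := by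
          rw [abs_sub_comm, abs_of_pos (by linarith [hy.1] : 0 < y - x)]
          linarith [hy.1]
        have h1 : |x-y| ^ (2*H-2) ≤ (y/2) ^ (2*H-2) :=
          rpow_le_rpow_of_nonpos hy2 habs hHb
        have h2 : (y/2) ^ (2*H-2) = y ^ (2*H-2) * (2:ℝ)^(2-2*H) := by
          rw [show y/2 = y * (2:ℝ)⁻¹ by ring,
            Real.mul_rpow hy0.le (by norm_num), ← Real.rpow_neg_one (2:ℝ),
            ← Real.rpow_mul (by norm_num : (0:ℝ) ≤ 2)]
          congr 2
          ring
        have h3 : y ^ p * y ^ (2*H-2) = y ^ (p+2*H-2) := by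
          rw [← Real.rpow_add hy0]; congr 1; ring
        have h4 : y ^ (p+2*H-2) ≤ (2:ℝ)^((p+2*H-2) - β) * y ^ β := by
          have : y ^ (p+2*H-2) = y ^ ((p+2*H-2) - β) * y ^ β := by
            rw [← Real.rpow_add hy0]; congr 1; ring
          rw [this]
          apply mul_le_mul_of_nonneg_right _ (rpow_nonneg hy0.le _)
          exact Real.rpow_le_rpow hy0.le hy.2.le (by linarith)
        calc x^p * y^p * |x-y|^(2*H-2)
            ≤ x^p * y^p * ((y/2)^(2*H-2)) :=
              mul_le_mul_of_nonneg_left h1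
                (mul_nonneg (rpow_nonneg hx0.le _) (rpow_nonneg hy0.le _))
          _ = x^p * (y^p * y^(2*H-2)) * (2:ℝ)^(2-2*H) := by rw [h2]; ring
          _ = x^p * (2:ℝ)^(2-2*H) * y ^ (p+2*H-2) := by rw [h3]; ring
          _ ≤ x^p * (2:ℝ)^(2-2*H) * ((2:ℝ)^((p+2*H-2) - β) * y ^ β) := by
              apply mul_le_mul_of_nonneg_left h4
              exact mul_nonneg (rpow_nonneg hx0.le _) (rpow_nonneg (by norm_num) _)
          _ = (x^p * ((2:ℝ)^(2-2*H) * (2:ℝ)^((p+2*H-2) - β))) * y ^ β := by ring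
    _ ≤ ENNReal.ofReal (x^p * ((2:ℝ)^(2-2*H) * (2:ℝ)^((p+2*H-2) - β)))
          * ENNReal.ofReal ((2*x)^(β+1) / (-(β+1))) := by
        simp_rw [ENNReal.ofReal_mul hcC]
        rw [lintegral_const_mul' _ _ ENNReal.ofReal_ne_top]
        exact mul_le_mul_right (tail_neg β (2*x) 2 h2x hβ) _
    _ = ENNReal.ofReal ((((2:ℝ)^(2-2*H) * (2:ℝ)^((p+2*H-2) - β))
          * ((2:ℝ)^(β+1) / (-(β+1)))) * x ^ (p + (β+1))) := by
        rw [← ENNReal.ofReal_mul hcC]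
        congr 1
        rw [show 2*x = x*2 by ring, Real.mul_rpow hx0.le (by norm_num : (0:ℝ) ≤ 2),
          show x ^ (p + (β+1)) = x^p * x^(β+1) by
            rw [← Real.rpow_add hx0]]
        ring

lemma M_lt_top (p H : ℝ) (hH1 : 1/2 < H) (hH2 : H < 1) (hpH : 0 < p + H) :
    fPH p H 1 2 < ⊤ := by
  set β := min (p+2*H-2) (-1-(p+1)/2) with hβdef
  set KA := (1/2:ℝ)^(2*H-2) * ((1/2:ℝ)^(p+1) / (p+1)) with hKA
  set KB := ((1/2:ℝ)^p + (2:ℝ)^p) * (2 * ((2:ℝ)^(2*H-1) / (2*H-1))) with hKB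
  set KC := ((2:ℝ)^(2-2*H) * (2:ℝ)^((p+2*H-2) - β)) * ((2:ℝ)^(β+1) / (-(β+1))) with hKC
  have hp1 : -1 < p := by linarith
  have hβ : β < -1 := lt_of_le_of_lt (min_le_right _ _) (by linarith)
  have hs1 : -1 < 2*p+2*H-1 := by linarith
  have hs3 : -1 < p + (β+1) := by
    rcases le_total (p + 2*H - 2) (-1-(p+1)/2) with h | h
    · rw [hβdef, min_eq_left h]; linarith
    · rw [hβdef, min_eq_right h]; linarith
  have hKA0 : 0 ≤ KA :=
    mul_nonneg (rpow_nonneg (by norm_num) _)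
      (div_nonneg (rpow_nonneg (by norm_num) _) (by linarith))
  have hKB0 : 0 ≤ KB :=
    mul_nonneg (add_nonneg (rpow_nonneg (by norm_num) _) (rpow_nonneg (by norm_num) _))
      (mul_nonneg (by norm_num)
        (div_nonneg (rpow_nonneg (by norm_num) _) (by linarith)))
  have hKC0 : 0 ≤ KC :=
    mul_nonneg (mul_nonneg (rpow_nonneg (by norm_num) _) (rpow_nonneg (by norm_num) _))
      (div_nonneg (rpow_nonneg (by norm_num) _) (by linarith))
  have hinner : ∀ x ∈ Ioo (0:ℝ) 1,
      (∫⁻ y in Ioo (0:ℝ) 2, ENNReal.ofReal (x ^ p * y ^ p * |x - y| ^ (2*H-2)))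
        ≤ ENNReal.ofReal ((KA + KB) * x^(2*p+2*H-1))
          + ENNReal.ofReal (KC * x^(p+(β+1))) := by
    intro x hx
    have hx0 : 0 < x := hx.1
    have hsub : Ioo (0:ℝ) 2 ⊆ Ioo 0 (x/2) ∪ (Ico (x/2) (2*x) ∪ Ico (2*x) 2) := by
      intro y hy
      rcases lt_or_ge y (x/2) with h | h
      · exact Or.inl ⟨hy.1, h⟩
      rcases lt_or_ge y (2*x) with h2 | h2
      · exact Or.inr (Or.inl ⟨h, h2⟩)
      · exact Or.inr (Or.inr ⟨h2, hy.2⟩)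
    calc ∫⁻ y in Ioo (0:ℝ) 2, ENNReal.ofReal (x ^ p * y ^ p * |x - y| ^ (2*H-2))
        ≤ ∫⁻ y in Ioo 0 (x/2) ∪ (Ico (x/2) (2*x) ∪ Ico (2*x) 2),
            ENNReal.ofReal (x ^ p * y ^ p * |x - y| ^ (2*H-2)) :=
          lintegral_mono_set hsub
      _ ≤ (∫⁻ y in Ioo (0:ℝ) (x/2), ENNReal.ofReal (x ^ p * y ^ p * |x - y| ^ (2*H-2)))
          + ((∫⁻ y in Ico (x/2) (2*x), ENNReal.ofReal (x ^ p * y ^ p * |x - y| ^ (2*H-2)))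
            + ∫⁻ y in Ico (2*x) (2:ℝ), ENNReal.ofReal (x ^ p * y ^ p * |x - y| ^ (2*H-2))) :=
          le_trans (lintegral_union_le _ _ _)
            (add_le_add_right (lintegral_union_le _ _ _) _)
      _ ≤ ENNReal.ofReal (KA * x^(2*p+2*H-1))
          + (ENNReal.ofReal (KB * x^(2*p+2*H-1)) + ENNReal.ofReal (KC * x^(p+(β+1)))) :=
          add_le_add (piece_A p H x hH1 hH2 hpH hx0)
            (add_le_add (piece_B p H x hH1 hH2 hpH hx0) (piece_C p H x hH1 hH2 hpH hx0))
      _ = ENNReal.ofReal ((KA + KB) * x^(2*p+2*H-1)) + ENNReal.ofReal (KC * x^(p+(β+1))) := by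
          rw [← add_assoc, ← ENNReal.ofReal_add
            (mul_nonneg hKA0 (rpow_nonneg hx0.le _)) (mul_nonneg hKB0 (rpow_nonneg hx0.le _))]
          congr 2
          ring
  have hmeas1 : Measurable fun x : ℝ => ENNReal.ofReal ((KA + KB) * x^(2*p+2*H-1)) := by
    fun_prop
  have hdef : fPH p H 1 2 = ∫⁻ x in Ioo (0:ℝ) 1, ∫⁻ y in Ioo (0:ℝ) 2,
      ENNReal.ofReal (x ^ p * y ^ p * |x - y| ^ (2*H-2)) := by
    simp [fPH]
  rw [hdef]
  calc (∫⁻ x in Ioo (0:ℝ) 1, ∫⁻ y in Ioo (0:ℝ) 2,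
        ENNReal.ofReal (x ^ p * y ^ p * |x - y| ^ (2*H-2)))
      ≤ ∫⁻ x in Ioo (0:ℝ) 1, (ENNReal.ofReal ((KA + KB) * x^(2*p+2*H-1))
          + ENNReal.ofReal (KC * x^(p+(β+1)))) :=
        setLIntegral_mono' measurableSet_Ioo hinner
    _ = (∫⁻ x in Ioo (0:ℝ) 1, ENNReal.ofReal ((KA + KB) * x^(2*p+2*H-1)))
        + ∫⁻ x in Ioo (0:ℝ) 1, ENNReal.ofReal (KC * x^(p+(β+1))) :=
        lintegral_add_left hmeas1 _
    _ < ⊤ := by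
        have e1 : ∫⁻ x in Ioo (0:ℝ) 1, ENNReal.ofReal ((KA + KB) * x^(2*p+2*H-1))
            = ENNReal.ofReal (KA + KB) * ENNReal.ofReal ((1:ℝ)^(2*p+2*H-1+1)/(2*p+2*H-1+1)) := by
          simp_rw [ENNReal.ofReal_mul (by linarith : (0:ℝ) ≤ KA + KB)]
          rw [lintegral_const_mul' _ _ ENNReal.ofReal_ne_top,
            lint_rpow_Ioo _ 1 hs1 one_pos]
        have e2 : ∫⁻ x in Ioo (0:ℝ) 1, ENNReal.ofReal (KC * x^(p+(β+1)))
            = ENNReal.ofReal KC * ENNReal.ofReal ((1:ℝ)^(p+(β+1)+1)/(p+(β+1)+1)) := by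
          simp_rw [ENNReal.ofReal_mul hKC0]
          rw [lintegral_const_mul' _ _ ENNReal.ofReal_ne_top,
            lint_rpow_Ioo _ 1 hs3 one_pos]
        rw [e1, e2]
        exact ENNReal.add_lt_top.2
          ⟨ENNReal.mul_lt_top ENNReal.ofReal_lt_top ENNReal.ofReal_lt_top,
           ENNReal.mul_lt_top ENNReal.ofReal_lt_top ENNReal.ofReal_lt_top⟩

lemma fPH_ne_zero (p H : ℝ) (hH2 : H < 1) : fPH p H 1 1 ≠ 0 := by
  have hHb : 2*H - 2 ≤ 0 := by linarith
  set ε := (2:ℝ)^(-|p|) * (8:ℝ)^(-|p|) with hε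
  have hε0 : 0 < ε :=
    mul_pos (rpow_pos_of_pos two_pos _) (rpow_pos_of_pos (by norm_num) _)
  have hlow : ∀ x ∈ Ioo (1/2:ℝ) 1, ∀ y ∈ Ioo (1/8:ℝ) (1/4:ℝ),
      ε ≤ x^p*y^p*|x-y|^(2*H-2) := by
    intro x hx y hy
    have hx0 : 0 < x := by linarith [hx.1]
    have hy0 : 0 < y := by linarith [hy.1]
    have hxp : (2:ℝ)^(-|p|) ≤ x^p := by
      rcases le_or_gt 0 p with hp | hp
      · rw [abs_of_nonneg hp, Real.rpow_neg (by norm_num), ← Real.inv_rpow (by norm_num)]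
        exact Real.rpow_le_rpow (by norm_num) (by linarith [hx.1]) hp
      · rw [abs_of_neg hp, neg_neg]
        exact rpow_le_rpow_of_nonpos hx0 (by linarith [hx.2]) hp.le
    have hyp : (8:ℝ)^(-|p|) ≤ y^p := by
      rcases le_or_gt 0 p with hp | hp
      · rw [abs_of_nonneg hp, Real.rpow_neg (by norm_num), ← Real.inv_rpow (by norm_num)]
        exact Real.rpow_le_rpow (by norm_num) (by linarith [hy.1]) hp
      · rw [abs_of_neg hp, neg_neg]
        exact rpow_le_rpow_of_nonpos hy0 (by linarith [hy.2]) hp.le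
    have habs0 : 0 < |x - y| := by
      rw [abs_of_pos (by linarith [hx.1, hy.2] : 0 < x - y)]
      linarith [hx.1, hy.2]
    have habs1 : |x - y| ≤ 1 := by
      rw [abs_of_pos (by linarith [hx.1, hy.2] : 0 < x - y)]
      linarith [hx.2, hy.1]
    have h1 : 1 ≤ |x-y|^(2*H-2) := by
      have := rpow_le_rpow_of_nonpos habs0 habs1 hHb
      rwa [Real.one_rpow] at this
    calc ε ≤ x^p * y^p :=
          mul_le_mul hxp hyp (rpow_nonneg (by norm_num) _) (rpow_nonneg hx0.le _)
      _ = x^p * y^p * 1 := by ring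
      _ ≤ x^p*y^p*|x-y|^(2*H-2) :=
          mul_le_mul_of_nonneg_left h1
            (mul_nonneg (rpow_nonneg hx0.le _) (rpow_nonneg hy0.le _))
  have step : ∀ x ∈ Ioo (1/2:ℝ) 1,
      ENNReal.ofReal ε * ENNReal.ofReal (1/8:ℝ)
        ≤ ∫⁻ y in Ioo (0:ℝ) 1, ENNReal.ofReal (x^p*y^p*|x-y|^(2*H-2)) := by
    intro x hx
    calc ENNReal.ofReal ε * ENNReal.ofReal (1/8:ℝ)
        = ∫⁻ _y in Ioo (1/8:ℝ) (1/4:ℝ), ENNReal.ofReal ε := by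
          rw [setLIntegral_const, Real.volume_Ioo]; norm_num
      _ ≤ ∫⁻ y in Ioo (1/8:ℝ) (1/4:ℝ), ENNReal.ofReal (x^p*y^p*|x-y|^(2*H-2)) :=
          setLIntegral_mono' measurableSet_Ioo
            (fun y hy => ENNReal.ofReal_le_ofReal (hlow x hx y hy))
      _ ≤ ∫⁻ y in Ioo (0:ℝ) 1, ENNReal.ofReal (x^p*y^p*|x-y|^(2*H-2)) :=
          lintegral_mono_set (fun y hy => ⟨by linarith [hy.1], by linarith [hy.2]⟩)
  have hpos : 0 < fPH p H 1 1 := by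
    have hchain : ENNReal.ofReal ε * ENNReal.ofReal (1/8:ℝ) * ENNReal.ofReal (1/2:ℝ)
        ≤ fPH p H 1 1 := by
      have hdef : fPH p H 1 1 = ∫⁻ x in Ioo (0:ℝ) 1, ∫⁻ y in Ioo (0:ℝ) 1,
          ENNReal.ofReal (x ^ p * y ^ p * |x - y| ^ (2*H-2)) := by simp [fPH]
      rw [hdef]
      calc ENNReal.ofReal ε * ENNReal.ofReal (1/8:ℝ) * ENNReal.ofReal (1/2:ℝ)
          = ∫⁻ _x in Ioo (1/2:ℝ) 1, ENNReal.ofReal ε * ENNReal.ofReal (1/8:ℝ) := by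
            rw [setLIntegral_const, Real.volume_Ioo]; norm_num
        _ ≤ ∫⁻ x in Ioo (1/2:ℝ) 1, ∫⁻ y in Ioo (0:ℝ) 1,
              ENNReal.ofReal (x^p*y^p*|x-y|^(2*H-2)) :=
            setLIntegral_mono' measurableSet_Ioo step
        _ ≤ ∫⁻ x in Ioo (0:ℝ) 1, ∫⁻ y in Ioo (0:ℝ) 1,
              ENNReal.ofReal (x^p*y^p*|x-y|^(2*H-2)) :=
            lintegral_mono_set (fun x hx => ⟨by linarith [hx.1], by linarith [hx.2]⟩)
    refine lt_of_lt_of_le ?_ hchain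
    have h8 : (0:ℝ≥0∞) < ENNReal.ofReal (1/8:ℝ) := ENNReal.ofReal_pos.2 (by norm_num)
    have h2 : (0:ℝ≥0∞) < ENNReal.ofReal (1/2:ℝ) := ENNReal.ofReal_pos.2 (by norm_num)
    have hE : (0:ℝ≥0∞) < ENNReal.ofReal ε := ENNReal.ofReal_pos.2 hε0
    exact ENNReal.mul_pos (ENNReal.mul_pos hE.ne' h8.ne').ne' h2.ne'
  exact hpos.ne'

lemma R1 (q H τ : ℝ) (hq : 0 < q) (hH1 : 0 < H) (hH2 : H < 1) (hτ : 0 ≤ τ) :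
    Real.exp (-τ*q) ≤ Real.exp 1 * max (τ * Real.exp (-τ*q)) (Real.exp (-τ*(1-H))) := by
  have hmax0 : 0 ≤ max (τ * Real.exp (-τ*q)) (Real.exp (-τ*(1-H))) :=
    le_max_of_le_right (Real.exp_pos _).le
  have he1 : (1:ℝ) ≤ Real.exp 1 := Real.one_le_exp (by norm_num)
  rcases le_total 1 τ with h | h
  · calc Real.exp (-τ*q) ≤ τ * Real.exp (-τ*q) :=
          le_mul_of_one_le_left (Real.exp_pos _).le h
      _ ≤ max (τ * Real.exp (-τ*q)) (Real.exp (-τ*(1-H))) := le_max_left _ _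
      _ ≤ Real.exp 1 * max _ _ := le_mul_of_one_le_left hmax0 he1
  · calc Real.exp (-τ*q) ≤ 1 := Real.exp_le_one_iff.2 (by nlinarith)
      _ ≤ Real.exp 1 * Real.exp (-τ*(1-H)) := by
          rw [← Real.exp_add]
          apply Real.one_le_exp
          nlinarith [mul_le_mul_of_nonneg_right h (by linarith : (0:ℝ) ≤ 1-H)]
      _ ≤ Real.exp 1 * max _ _ :=
          mul_le_mul_of_nonneg_left (le_max_right _ _) (Real.exp_pos 1).le

lemma int_max (p H : ℝ) (hpH : 0 < p + H) (hH2 : H < 1) :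
    ∫⁻ τ in Ici (0:ℝ),
      ENNReal.ofReal (max (τ * Real.exp (-τ*(p+H))) (Real.exp (-τ*(1-H)))) < ⊤ := by
  set q := p + H with hq
  have hq0 : 0 < q := hpH
  have hpt : ∀ τ : ℝ, 0 ≤ τ →
      ENNReal.ofReal (max (τ * Real.exp (-τ*q)) (Real.exp (-τ*(1-H))))
        ≤ ENNReal.ofReal ((2/q) * Real.exp (-(q/2)*τ))
          + ENNReal.ofReal (Real.exp (-(1-H)*τ)) := by
    intro τ hτ
    have h1 : τ * Real.exp (-τ*q) ≤ (2/q) * Real.exp (-(q/2)*τ) := by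
      have hz : τ*q/2 ≤ Real.exp (τ*q/2) := by
        have := Real.add_one_le_exp (τ*q/2); linarith
      have hτle : τ ≤ (2/q) * Real.exp (τ*q/2) := by
        rw [div_mul_eq_mul_div, le_div_iff₀ hq0]
        nlinarith
      calc τ * Real.exp (-τ*q) ≤ ((2/q) * Real.exp (τ*q/2)) * Real.exp (-τ*q) :=
            mul_le_mul_of_nonneg_right hτle (Real.exp_pos _).le
        _ = (2/q) * Real.exp (-(q/2)*τ) := by
            rw [mul_assoc, ← Real.exp_add]
            congr 2
            ring
    have h2 : Real.exp (-τ*(1-H)) = Real.exp (-(1-H)*τ) := by congr 1; ring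
    have hv0 : 0 ≤ Real.exp (-(1-H)*τ) := (Real.exp_pos _).le
    have hu0 : 0 ≤ (2/q) * Real.exp (-(q/2)*τ) :=
      mul_nonneg (by positivity) (Real.exp_pos _).le
    rw [← ENNReal.ofReal_add hu0 hv0]
    apply ENNReal.ofReal_le_ofReal
    apply max_le
    · linarith
    · rw [h2]; linarith
  have hfin : ∀ c k : ℝ, 0 < k →
      (∫⁻ τ in Ici (0:ℝ), ENNReal.ofReal (c * Real.exp (-k*τ))) < ⊤ := by
    intro c k hk
    have hint : IntegrableOn (fun τ : ℝ => c * Real.exp (-k*τ)) (Ioi 0) :=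
      (exp_neg_integrableOn_Ioi 0 hk).const_mul c
    rw [← setLIntegral_congr (Ioi_ae_eq_Ici (a := (0:ℝ)))]
    calc (∫⁻ τ in Ioi (0:ℝ), ENNReal.ofReal (c * Real.exp (-k*τ)))
        ≤ ∫⁻ τ in Ioi (0:ℝ), ‖c * Real.exp (-k*τ)‖ₑ :=
          lintegral_mono fun τ => ofReal_le_enorm _
      _ < ⊤ := hint.2
  calc ∫⁻ τ in Ici (0:ℝ),
        ENNReal.ofReal (max (τ * Real.exp (-τ*(p+H))) (Real.exp (-τ*(1-H))))
      ≤ ∫⁻ τ in Ici (0:ℝ),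
          (ENNReal.ofReal ((2/q) * Real.exp (-(q/2)*τ))
            + ENNReal.ofReal (Real.exp (-(1-H)*τ))) :=
        setLIntegral_mono' measurableSet_Ici fun τ hτ => hpt τ hτ
    _ = (∫⁻ τ in Ici (0:ℝ), ENNReal.ofReal ((2/q) * Real.exp (-(q/2)*τ)))
        + ∫⁻ τ in Ici (0:ℝ), ENNReal.ofReal (Real.exp (-(1-H)*τ)) :=
        lintegral_add_left (by fun_prop) _
    _ < ⊤ := by
        have h2 := hfin 1 (1-H) (by linarith)
        simp only [one_mul] at h2
        exact ENNReal.add_lt_top.2 ⟨hfin (2/q) (q/2) (by linarith), h2⟩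

lemma tail_raw (p H b : ℝ) (hH1 : 1/2 < H) (hH2 : H < 1) (hpH : 0 < p + H) :
    (∫⁻ x in Ioo (0:ℝ) 1, ∫⁻ y in Ico (2:ℝ) b,
        ENNReal.ofReal (x ^ p * y ^ p * |x - y| ^ (2*H-2)))
      ≤ (ENNReal.ofReal ((2:ℝ)^(2-2*H)) * ENNReal.ofReal ((1:ℝ)^(p+1)/(p+1)))
        * ∫⁻ y in Ico (2:ℝ) b, ENNReal.ofReal (y ^ (p+2*H-2)) := by
  have hp1 : -1 < p := by linarith
  have hHb : 2*H - 2 ≤ 0 := by linarith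
  have hc0 : (0:ℝ) ≤ (2:ℝ)^(2-2*H) := rpow_nonneg (by norm_num) _
  set J := ∫⁻ y in Ico (2:ℝ) b, ENNReal.ofReal (y ^ (p+2*H-2)) with hJ
  have hptw : ∀ x ∈ Ioo (0:ℝ) 1,
      (∫⁻ y in Ico (2:ℝ) b, ENNReal.ofReal (x ^ p * y ^ p * |x - y| ^ (2*H-2)))
        ≤ ENNReal.ofReal ((2:ℝ)^(2-2*H) * x ^ p) * J := by
    intro x hx
    have hx0 : 0 < x := hx.1
    calc (∫⁻ y in Ico (2:ℝ) b, ENNReal.ofReal (x ^ p * y ^ p * |x - y| ^ (2*H-2)))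
        ≤ ∫⁻ y in Ico (2:ℝ) b,
            ENNReal.ofReal (((2:ℝ)^(2-2*H) * x ^ p) * y ^ (p+2*H-2)) := by
          refine setLIntegral_mono' measurableSet_Ico fun y hy => ENNReal.ofReal_le_ofReal ?_
          have hy0 : 0 < y := by linarith [hy.1]
          have hy2 : 0 < y/2 := by linarith
          have habs : y/2 ≤ |x - y| := by
            rw [abs_sub_comm, abs_of_pos (by linarith [hy.1, hx.2] : 0 < y - x)]
            linarith [hy.1, hx.2]
          have h1 : |x-y| ^ (2*H-2) ≤ (y/2) ^ (2*H-2) :=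
            rpow_le_rpow_of_nonpos hy2 habs hHb
          have h2 : (y/2) ^ (2*H-2) = y ^ (2*H-2) * (2:ℝ)^(2-2*H) := by
            rw [show y/2 = y * (2:ℝ)⁻¹ by ring,
              Real.mul_rpow hy0.le (by norm_num), ← Real.rpow_neg_one (2:ℝ),
              ← Real.rpow_mul (by norm_num : (0:ℝ) ≤ 2)]
            congr 2
            ring
          have h3 : y ^ p * y ^ (2*H-2) = y ^ (p+2*H-2) := by
            rw [← Real.rpow_add hy0]; congr 1; ring
          calc x^p * y^p * |x-y|^(2*H-2)
              ≤ x^p * y^p * ((y/2)^(2*H-2)) :=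
                mul_le_mul_of_nonneg_left h1
                  (mul_nonneg (rpow_nonneg hx0.le _) (rpow_nonneg hy0.le _))
            _ = x^p * (y^p * y^(2*H-2)) * (2:ℝ)^(2-2*H) := by rw [h2]; ring
            _ = ((2:ℝ)^(2-2*H) * x^p) * y ^ (p+2*H-2) := by rw [h3]; ring
      _ = ENNReal.ofReal ((2:ℝ)^(2-2*H) * x ^ p) * J := by
          simp_rw [ENNReal.ofReal_mul (mul_nonneg hc0 (rpow_nonneg hx0.le _))]
          rw [lintegral_const_mul' _ _ ENNReal.ofReal_ne_top, hJ]
  calc (∫⁻ x in Ioo (0:ℝ) 1, ∫⁻ y in Ico (2:ℝ) b,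
        ENNReal.ofReal (x ^ p * y ^ p * |x - y| ^ (2*H-2)))
      ≤ ∫⁻ x in Ioo (0:ℝ) 1, ENNReal.ofReal ((2:ℝ)^(2-2*H) * x ^ p) * J :=
        setLIntegral_mono' measurableSet_Ioo hptw
    _ = (∫⁻ x in Ioo (0:ℝ) 1, ENNReal.ofReal ((2:ℝ)^(2-2*H) * x ^ p)) * J :=
        lintegral_mul_const _ (by fun_prop)
    _ = (ENNReal.ofReal ((2:ℝ)^(2-2*H)) * ENNReal.ofReal ((1:ℝ)^(p+1)/(p+1))) * J := by
        congr 1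
        simp_rw [ENNReal.ofReal_mul hc0]
        rw [lintegral_const_mul' _ _ ENNReal.ofReal_ne_top,
          lint_rpow_Ioo p 1 hp1 one_pos]

lemma key_bound (p H : ℝ) (hH1 : 1/2 < H) (hH2 : H < 1) (hpH : 0 < p + H) :
    ∃ K : ℝ≥0∞, K ≠ ⊤ ∧ ∀ τ : ℝ, 0 ≤ τ →
      ENNReal.ofReal (Real.exp (-τ * (p + H))) * fPH p H 1 (Real.exp τ)
        ≤ K * ENNReal.ofReal (max (τ * Real.exp (-τ * (p + H)))
            (Real.exp (-τ * (1 - H)))) := by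
  have hp1 : -1 < p := by linarith
  have hM : fPH p H 1 2 < ⊤ := M_lt_top p H hH1 hH2 hpH
  set M := fPH p H 1 2 with hMdef
  set C0 : ℝ≥0∞ := ENNReal.ofReal ((2:ℝ)^(2-2*H)) * ENNReal.ofReal ((1:ℝ)^(p+1)/(p+1))
    with hC0
  have hC0top : C0 ≠ ⊤ := by
    rw [hC0]; exact (ENNReal.mul_lt_top ENNReal.ofReal_lt_top ENNReal.ofReal_lt_top).ne
  have hsplit : ∀ τ : ℝ, fPH p H 1 (Real.exp τ)
      ≤ M + ∫⁻ x in Ioo (0:ℝ) 1, ∫⁻ y in Ico (2:ℝ) (Real.exp τ),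
          ENNReal.ofReal (x ^ p * y ^ p * |x - y| ^ (2*H-2)) := by
    intro τ
    have hdef : fPH p H 1 (Real.exp τ) = ∫⁻ x in Ioo (0:ℝ) 1, ∫⁻ y in Ioo (0:ℝ) (Real.exp τ),
        ENNReal.ofReal (x ^ p * y ^ p * |x - y| ^ (2*H-2)) := by simp [fPH]
    have hdef2 : M = ∫⁻ x in Ioo (0:ℝ) 1, ∫⁻ y in Ioo (0:ℝ) 2,
        ENNReal.ofReal (x ^ p * y ^ p * |x - y| ^ (2*H-2)) := by simp [hMdef, fPH]
    rw [hdef, hdef2, ← lintegral_add_left (inner_meas p H (Ioo (0:ℝ) 2)) _]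
    apply lintegral_mono fun x => ?_
    calc ∫⁻ y in Ioo (0:ℝ) (Real.exp τ),
          ENNReal.ofReal (x ^ p * y ^ p * |x - y| ^ (2*H-2))
        ≤ ∫⁻ y in Ioo (0:ℝ) 2 ∪ Ico (2:ℝ) (Real.exp τ),
            ENNReal.ofReal (x ^ p * y ^ p * |x - y| ^ (2*H-2)) :=
          lintegral_mono_set fun y hy => by
            rcases lt_or_ge y 2 with h | h
            exacts [Or.inl ⟨hy.1, h⟩, Or.inr ⟨h, hy.2⟩]
      _ ≤ _ := lintegral_union_le _ _ _
  have hterm1 : ∀ τ : ℝ, 0 ≤ τ →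
      ENNReal.ofReal (Real.exp (-τ * (p + H))) * M
        ≤ (M * ENNReal.ofReal (Real.exp 1))
          * ENNReal.ofReal (max (τ * Real.exp (-τ * (p + H)))
              (Real.exp (-τ * (1 - H)))) := by
    intro τ hτ
    have hr := R1 (p+H) H τ hpH (by linarith) hH2 hτ
    calc ENNReal.ofReal (Real.exp (-τ * (p + H))) * M
        ≤ (ENNReal.ofReal (Real.exp 1)
            * ENNReal.ofReal (max (τ * Real.exp (-τ * (p + H)))
                (Real.exp (-τ * (1 - H))))) * M := by
          apply mul_le_mul_left
          rw [← ENNReal.ofReal_mul (Real.exp_pos 1).le]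
          exact ENNReal.ofReal_le_ofReal hr
      _ = (M * ENNReal.ofReal (Real.exp 1))
          * ENNReal.ofReal (max (τ * Real.exp (-τ * (p + H)))
              (Real.exp (-τ * (1 - H)))) := by ring
  rcases le_or_gt (p + 2*H - 1) 0 with hc | hc
  · -- log case
    refine ⟨M * ENNReal.ofReal (Real.exp 1) + C0, ?_, ?_⟩
    · exact (ENNReal.add_lt_top.2
        ⟨ENNReal.mul_lt_top hM ENNReal.ofReal_lt_top, hC0top.lt_top⟩).ne
    intro τ hτ
    have hJ : (∫⁻ y in Ico (2:ℝ) (Real.exp τ), ENNReal.ofReal (y ^ (p+2*H-2)))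
        ≤ ENNReal.ofReal τ := by
      calc (∫⁻ y in Ico (2:ℝ) (Real.exp τ), ENNReal.ofReal (y ^ (p+2*H-2)))
          ≤ ∫⁻ y in Ico (2:ℝ) (Real.exp τ), ENNReal.ofReal (y ^ (-1:ℝ)) := by
            refine setLIntegral_mono' measurableSet_Ico fun y hy => ?_
            apply ENNReal.ofReal_le_ofReal
            exact Real.rpow_le_rpow_of_exponent_le (by linarith [hy.1]) (by linarith)
        _ ≤ ENNReal.ofReal (Real.log (Real.exp τ)) := tail_log 2 _ (by norm_num)
        _ = ENNReal.ofReal τ := by rw [Real.log_exp]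
    have htail : (∫⁻ x in Ioo (0:ℝ) 1, ∫⁻ y in Ico (2:ℝ) (Real.exp τ),
          ENNReal.ofReal (x ^ p * y ^ p * |x - y| ^ (2*H-2)))
        ≤ C0 * ENNReal.ofReal τ :=
      le_trans (tail_raw p H (Real.exp τ) hH1 hH2 hpH) (mul_le_mul_right hJ _)
    calc ENNReal.ofReal (Real.exp (-τ * (p + H))) * fPH p H 1 (Real.exp τ)
        ≤ ENNReal.ofReal (Real.exp (-τ * (p + H))) * (M + C0 * ENNReal.ofReal τ) :=
          mul_le_mul_right (le_trans (hsplit τ) (add_le_add_right htail M)) _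
      _ = ENNReal.ofReal (Real.exp (-τ * (p + H))) * M
          + C0 * (ENNReal.ofReal τ * ENNReal.ofReal (Real.exp (-τ * (p + H)))) := by ring
      _ ≤ (M * ENNReal.ofReal (Real.exp 1))
            * ENNReal.ofReal (max (τ * Real.exp (-τ * (p + H))) (Real.exp (-τ * (1 - H))))
          + C0 * ENNReal.ofReal (max (τ * Real.exp (-τ * (p + H)))
              (Real.exp (-τ * (1 - H)))) := by
          apply add_le_add (hterm1 τ hτ)
          apply mul_le_mul_right
          rw [← ENNReal.ofReal_mul hτ]
          exact ENNReal.ofReal_le_ofReal (le_max_left _ _)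
      _ = (M * ENNReal.ofReal (Real.exp 1) + C0)
          * ENNReal.ofReal (max (τ * Real.exp (-τ * (p + H)))
              (Real.exp (-τ * (1 - H)))) := by ring
  · -- power case
    refine ⟨M * ENNReal.ofReal (Real.exp 1) + C0 * ENNReal.ofReal (1/(p+2*H-1)), ?_, ?_⟩
    · exact (ENNReal.add_lt_top.2
        ⟨ENNReal.mul_lt_top hM ENNReal.ofReal_lt_top,
         ENNReal.mul_lt_top hC0top.lt_top ENNReal.ofReal_lt_top⟩).ne
    intro τ hτ
    have hb0 : (0:ℝ) < Real.exp τ := Real.exp_pos τ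
    have hJ : (∫⁻ y in Ico (2:ℝ) (Real.exp τ), ENNReal.ofReal (y ^ (p+2*H-2)))
        ≤ ENNReal.ofReal (Real.exp (τ*(p+2*H-1))) * ENNReal.ofReal (1/(p+2*H-1)) := by
      calc (∫⁻ y in Ico (2:ℝ) (Real.exp τ), ENNReal.ofReal (y ^ (p+2*H-2)))
          ≤ ∫⁻ y in Ioo (0:ℝ) (Real.exp τ), ENNReal.ofReal (y ^ (p+2*H-2)) :=
            lintegral_mono_set fun y hy => ⟨by linarith [hy.1], hy.2⟩
        _ = ENNReal.ofReal ((Real.exp τ) ^ (p+2*H-2+1) / (p+2*H-2+1)) :=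
            lint_rpow_Ioo _ _ (by linarith) hb0
        _ = ENNReal.ofReal (Real.exp (τ*(p+2*H-1))) * ENNReal.ofReal (1/(p+2*H-1)) := by
            rw [← ENNReal.ofReal_mul (Real.exp_pos _).le]
            congr 1
            rw [show p+2*H-2+1 = p+2*H-1 by ring, ← Real.exp_mul]
            ring
    have htail : (∫⁻ x in Ioo (0:ℝ) 1, ∫⁻ y in Ico (2:ℝ) (Real.exp τ),
          ENNReal.ofReal (x ^ p * y ^ p * |x - y| ^ (2*H-2)))
        ≤ C0 * (ENNReal.ofReal (Real.exp (τ*(p+2*H-1))) * ENNReal.ofReal (1/(p+2*H-1))) :=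
      le_trans (tail_raw p H (Real.exp τ) hH1 hH2 hpH) (mul_le_mul_right hJ _)
    have hexp : ENNReal.ofReal (Real.exp (-τ * (p + H)))
        * ENNReal.ofReal (Real.exp (τ*(p+2*H-1)))
        = ENNReal.ofReal (Real.exp (-τ * (1 - H))) := by
      rw [← ENNReal.ofReal_mul (Real.exp_pos _).le, ← Real.exp_add]
      congr 2
      ring
    calc ENNReal.ofReal (Real.exp (-τ * (p + H))) * fPH p H 1 (Real.exp τ)
        ≤ ENNReal.ofReal (Real.exp (-τ * (p + H)))
            * (M + C0 * (ENNReal.ofReal (Real.exp (τ*(p+2*H-1)))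
                * ENNReal.ofReal (1/(p+2*H-1)))) :=
          mul_le_mul_right (le_trans (hsplit τ) (add_le_add_right htail M)) _
      _ = ENNReal.ofReal (Real.exp (-τ * (p + H))) * M
          + C0 * ENNReal.ofReal (1/(p+2*H-1))
            * (ENNReal.ofReal (Real.exp (-τ * (p + H)))
              * ENNReal.ofReal (Real.exp (τ*(p+2*H-1)))) := by ring
      _ = ENNReal.ofReal (Real.exp (-τ * (p + H))) * M
          + C0 * ENNReal.ofReal (1/(p+2*H-1))
            * ENNReal.ofReal (Real.exp (-τ * (1 - H))) := by rw [hexp]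
      _ ≤ (M * ENNReal.ofReal (Real.exp 1))
            * ENNReal.ofReal (max (τ * Real.exp (-τ * (p + H))) (Real.exp (-τ * (1 - H))))
          + C0 * ENNReal.ofReal (1/(p+2*H-1))
            * ENNReal.ofReal (max (τ * Real.exp (-τ * (p + H)))
                (Real.exp (-τ * (1 - H)))) := by
          apply add_le_add (hterm1 τ hτ)
          exact mul_le_mul_right (ENNReal.ofReal_le_ofReal (le_max_right _ _)) _
      _ = (M * ENNReal.ofReal (Real.exp 1) + C0 * ENNReal.ofReal (1/(p+2*H-1)))
          * ENNReal.ofReal (max (τ * Real.exp (-τ * (p + H)))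
              (Real.exp (-τ * (1 - H)))) := by ring

theorem stmt_4 (p H : ℝ) (hH1 : 1/2 < H) (hH2 : H < 1) (hpH : 0 < p + H) :
    ∃ c : ℝ≥0∞, c < ⊤ ∧
      (∀ τ : ℝ, 0 ≤ τ →
        ENNReal.ofReal (Real.exp (-τ * (p + H))) * fPH p H 1 (Real.exp τ) / fPH p H 1 1
          ≤ c * ENNReal.ofReal (max (τ * Real.exp (-τ * (p + H)))
              (Real.exp (-τ * (1 - H))))) ∧
      (∫⁻ τ in Ici (0:ℝ),
        ENNReal.ofReal (Real.exp (-τ * (p + H))) * fPH p H 1 (Real.exp τ) / fPH p H 1 1) < ⊤ := by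
  obtain ⟨K, hKtop, hbd⟩ := key_bound p H hH1 hH2 hpH
  by_cases htop : fPH p H 1 1 = ⊤
  · refine ⟨1, by norm_num, ?_, ?_⟩
    · intro τ hτ
      rw [htop, ENNReal.div_top]
      exact zero_le
    · simp only [htop, ENNReal.div_top]
      simp
  · have hne : fPH p H 1 1 ≠ 0 := fPH_ne_zero p H hH2
    have hcbound : ∀ τ : ℝ, 0 ≤ τ →
        ENNReal.ofReal (Real.exp (-τ * (p + H))) * fPH p H 1 (Real.exp τ) / fPH p H 1 1
          ≤ (K * (fPH p H 1 1)⁻¹) * ENNReal.ofReal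
              (max (τ * Real.exp (-τ * (p + H))) (Real.exp (-τ * (1 - H)))) := by
      intro τ hτ
      rw [div_eq_mul_inv]
      calc ENNReal.ofReal (Real.exp (-τ * (p + H))) * fPH p H 1 (Real.exp τ)
            * (fPH p H 1 1)⁻¹
          ≤ (K * ENNReal.ofReal (max (τ * Real.exp (-τ * (p + H)))
              (Real.exp (-τ * (1 - H))))) * (fPH p H 1 1)⁻¹ :=
            mul_le_mul_left (hbd τ hτ) _
        _ = (K * (fPH p H 1 1)⁻¹) * ENNReal.ofReal
              (max (τ * Real.exp (-τ * (p + H))) (Real.exp (-τ * (1 - H)))) := by ring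
    have hKc : K * (fPH p H 1 1)⁻¹ < ⊤ :=
      ENNReal.mul_lt_top hKtop.lt_top (ENNReal.inv_lt_top.2 (pos_iff_ne_zero.2 hne))
    refine ⟨K * (fPH p H 1 1)⁻¹, hKc, hcbound, ?_⟩
    calc (∫⁻ τ in Ici (0:ℝ),
          ENNReal.ofReal (Real.exp (-τ * (p + H))) * fPH p H 1 (Real.exp τ) / fPH p H 1 1)
        ≤ ∫⁻ τ in Ici (0:ℝ), (K * (fPH p H 1 1)⁻¹) * ENNReal.ofReal
            (max (τ * Real.exp (-τ * (p + H))) (Real.exp (-τ * (1 - H)))) :=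
          setLIntegral_mono' measurableSet_Ici hcbound
      _ = (K * (fPH p H 1 1)⁻¹) * ∫⁻ τ in Ici (0:ℝ), ENNReal.ofReal
            (max (τ * Real.exp (-τ * (p + H))) (Real.exp (-τ * (1 - H)))) :=
          lintegral_const_mul' _ _ hKc.ne
      _ < ⊤ := ENNReal.mul_lt_top hKc (int_max p H hpH hH2)
end

section
/- For fixed $p>-1$ and $\tau>0$, $\lim_{H\uparrow 1} \frac{f_{p,H}(1,e^{\tau/(1-H)})}{e^{\tau(p+2H-1)/(1-H)}}=\frac{1}{(p+1)^2}$. -/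
open MeasureTheory Real Set Filter
open scoped ENNReal Topology

lemma measf (p θ : ℝ) : Measurable fun z : ℝ × ℝ => ENNReal.ofReal (z.1 ^ p * z.2 ^ p * |z.1 - z.2| ^ θ) := by
  measurability

lemma measf1 (p θ x : ℝ) : Measurable fun y : ℝ => ENNReal.ofReal (x ^ p * y ^ p * |x - y| ^ θ) :=
  (measf p θ).comp (measurable_const.prodMk measurable_id)

lemma measg (p : ℝ) : Measurable fun z : ℝ × ℝ => ENNReal.ofReal (z.1 ^ p * z.2 ^ p) := by
  measurability

lemma meas_inner (p θ : ℝ) (S : Set ℝ) :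
    Measurable fun x : ℝ => ∫⁻ y in S, ENNReal.ofReal (x ^ p * y ^ p * |x - y| ^ θ) :=
  Measurable.lintegral_prod_right' (f := fun z : ℝ × ℝ => ENNReal.ofReal (z.1 ^ p * z.2 ^ p * |z.1 - z.2| ^ θ)) (measf p θ)

lemma meas_innerg (p : ℝ) (S : Set ℝ) :
    Measurable fun x : ℝ => ∫⁻ y in S, ENNReal.ofReal (x ^ p * y ^ p) :=
  Measurable.lintegral_prod_right' (f := fun z : ℝ × ℝ => ENNReal.ofReal (z.1 ^ p * z.2 ^ p)) (measg p)

/-- pull a nonneg constant out -/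
lemma lint_const_mul (c : ℝ) (hc : 0 ≤ c) (f : ℝ → ℝ) (s : Set ℝ) :
    ∫⁻ y in s, ENNReal.ofReal (c * f y) = ENNReal.ofReal c * ∫⁻ y in s, ENNReal.ofReal (f y) := by
  simp_rw [ENNReal.ofReal_mul hc]
  exact lintegral_const_mul' _ _ ENNReal.ofReal_ne_top

lemma lint_pow_Ioo (c a : ℝ) (hc : -1 < c) (ha : 0 ≤ a) :
    ∫⁻ x in Ioo (0:ℝ) a, ENNReal.ofReal (x ^ c) = ENNReal.ofReal (a ^ (c+1) / (c+1)) := by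
  have hint : IntegrableOn (fun x : ℝ => x ^ c) (Ioo 0 a) volume := by
    have := (intervalIntegral.intervalIntegrable_rpow' (a := 0) (b := a) hc)
    rw [intervalIntegrable_iff_integrableOn_Ioc_of_le ha] at this
    exact this.mono_set Ioo_subset_Ioc_self
  rw [← ofReal_integral_eq_lintegral_ofReal hint]
  · congr 1
    rw [← integral_Ioc_eq_integral_Ioo, ← intervalIntegral.integral_of_le ha,
      integral_rpow (Or.inl hc), Real.zero_rpow (by linarith), sub_zero]
  · exact (ae_restrict_iff' measurableSet_Ioo).2 (ae_of_all _ fun x hx => Real.rpow_nonneg hx.1.le c)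

lemma lint_pow_Ico (c a b : ℝ) (hc : -1 < c) (h0 : 0 < a) (hab : a ≤ b) :
    ∫⁻ y in Ico a b, ENNReal.ofReal (y ^ c) = ENNReal.ofReal ((b ^ (c+1) - a ^ (c+1)) / (c+1)) := by
  have hint : IntegrableOn (fun x : ℝ => x ^ c) (Ico a b) volume := by
    have := (intervalIntegral.intervalIntegrable_rpow' (a := a) (b := b) hc)
    rw [intervalIntegrable_iff_integrableOn_Ioc_of_le hab] at this
    exact this.congr_set_ae MeasureTheory.Ico_ae_eq_Ioc
  rw [← ofReal_integral_eq_lintegral_ofReal hint]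
  · congr 1
    rw [MeasureTheory.integral_Ico_eq_integral_Ioo, ← MeasureTheory.integral_Ioc_eq_integral_Ioo,
      ← intervalIntegral.integral_of_le hab, integral_rpow (Or.inl hc)]
  · exact (ae_restrict_iff' measurableSet_Ico).2 (ae_of_all _ fun x hx => Real.rpow_nonneg (h0.trans_le hx.1).le c)

/-- ∫_{x-r}^{x} (x-y)^θ dy = r^{θ+1}/(θ+1), as lintegral over Icc. -/
lemma lint_sub_left (θ x r : ℝ) (hθ : -1 < θ) (hr : 0 ≤ r) :
    ∫⁻ y in Icc (x - r) x, ENNReal.ofReal ((x - y) ^ θ) = ENNReal.ofReal (r ^ (θ+1) / (θ+1)) := by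
  rw [← Measure.restrict_congr_set MeasureTheory.Ioo_ae_eq_Icc]
  have hint : IntegrableOn (fun y : ℝ => (x - y) ^ θ) (Ioo (x - r) x) volume := by
    have h0 := intervalIntegral.intervalIntegrable_rpow' (a := 0) (b := r) hθ
    have := (h0.comp_sub_left x).symm
    rw [sub_zero, intervalIntegrable_iff_integrableOn_Ioc_of_le (by linarith)] at this
    exact this.mono_set Ioo_subset_Ioc_self
  rw [← ofReal_integral_eq_lintegral_ofReal hint]
  · congr 1
    rw [← MeasureTheory.integral_Ioc_eq_integral_Ioo,
      ← intervalIntegral.integral_of_le (by linarith : x - r ≤ x),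
      intervalIntegral.integral_comp_sub_left (fun t => t ^ θ) x, sub_self, sub_sub_cancel,
      integral_rpow (Or.inl hθ), Real.zero_rpow (by linarith), sub_zero]
  · exact (ae_restrict_iff' measurableSet_Ioo).2
      (ae_of_all _ fun y hy => Real.rpow_nonneg (by linarith [hy.2]) θ)

lemma lint_sub_right (θ x r : ℝ) (hθ : -1 < θ) (hr : 0 ≤ r) :
    ∫⁻ y in Icc x (x + r), ENNReal.ofReal ((y - x) ^ θ) = ENNReal.ofReal (r ^ (θ+1) / (θ+1)) := by
  rw [← Measure.restrict_congr_set MeasureTheory.Ioo_ae_eq_Icc]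
  have hint : IntegrableOn (fun y : ℝ => (y - x) ^ θ) (Ioo x (x + r)) volume := by
    have h0 := intervalIntegral.intervalIntegrable_rpow' (a := 0) (b := r) hθ
    have := h0.comp_sub_right x
    rw [zero_add, intervalIntegrable_iff_integrableOn_Ioc_of_le (by linarith), add_comm r x] at this
    exact this.mono_set Ioo_subset_Ioc_self
  rw [← ofReal_integral_eq_lintegral_ofReal hint]
  · congr 1
    rw [← MeasureTheory.integral_Ioc_eq_integral_Ioo,
      ← intervalIntegral.integral_of_le (by linarith : x ≤ x + r),
      intervalIntegral.integral_comp_sub_right (fun t => t ^ θ) x, sub_self, add_sub_cancel_left,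
      integral_rpow (Or.inl hθ), Real.zero_rpow (by linarith), sub_zero]
  · exact (ae_restrict_iff' measurableSet_Ioo).2
      (ae_of_all _ fun y hy => Real.rpow_nonneg (by linarith [hy.1]) θ)

lemma lint_prod_Ico (p c a b : ℝ) (hp : -1 < p) (hc : -1 < c) (h0 : 0 < a) (hab : a ≤ b) :
    ∫⁻ x in Ioo (0:ℝ) 1, ∫⁻ y in Ico a b, ENNReal.ofReal (x ^ p * y ^ c)
      = ENNReal.ofReal (1/(p+1)) * ENNReal.ofReal ((b ^ (c+1) - a ^ (c+1))/(c+1)) := by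
  rw [setLIntegral_congr_fun measurableSet_Ioo
    ((fun x (hx : x ∈ Ioo (0:ℝ) 1) => by
      simp_rw [ENNReal.ofReal_mul (Real.rpow_nonneg hx.1.le p)]
      rw [lintegral_const_mul' _ _ ENNReal.ofReal_ne_top]))]
  rw [lintegral_mul_const' _ _ (by rw [lint_pow_Ico c a b hc h0 hab]; exact ENNReal.ofReal_ne_top),
    lint_pow_Ico c a b hc h0 hab, lint_pow_Ioo p 1 hp zero_le_one, Real.one_rpow]

lemma lint_prod_Ioo (p c a : ℝ) (hp : -1 < p) (hc : -1 < c) (ha : 0 ≤ a) :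
    ∫⁻ x in Ioo (0:ℝ) 1, ∫⁻ y in Ioo 0 a, ENNReal.ofReal (x ^ p * y ^ c)
      = ENNReal.ofReal (1/(p+1)) * ENNReal.ofReal (a ^ (c+1)/(c+1)) := by
  rw [setLIntegral_congr_fun measurableSet_Ioo
    ((fun x (hx : x ∈ Ioo (0:ℝ) 1) => by
      simp_rw [ENNReal.ofReal_mul (Real.rpow_nonneg hx.1.le p)]
      rw [lintegral_const_mul' _ _ ENNReal.ofReal_ne_top]))]
  rw [lintegral_mul_const' _ _ (by rw [lint_pow_Ioo c a hc ha]; exact ENNReal.ofReal_ne_top),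
    lint_pow_Ioo c a hc ha, lint_pow_Ioo p 1 hp zero_le_one, Real.one_rpow]

lemma tail_lower (p H b : ℝ) (hp : -1 < p) (hH : H < 1) (hα : 0 < p + 2*H - 1) (hb : 1 ≤ b) :
    ENNReal.ofReal (1/(p+1)) * ENNReal.ofReal ((b ^ (p+2*H-1) - 1)/(p+2*H-1)) ≤ fPH p H 1 b := by
  have key : ∫⁻ x in Ioo (0:ℝ) 1, ∫⁻ y in Ico 1 b, ENNReal.ofReal (x ^ p * y ^ (p+(2*H-2)))
      ≤ fPH p H 1 b := by
    refine setLIntegral_mono' measurableSet_Ioo fun x hx => ?_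
    refine le_trans (setLIntegral_mono' measurableSet_Ico fun y hy => ?_)
      (lintegral_mono_set (fun y hy => ⟨lt_of_lt_of_le one_pos hy.1, hy.2⟩))
    refine ENNReal.ofReal_le_ofReal ?_
    have hy0 : (0:ℝ) < y := lt_of_lt_of_le one_pos hy.1
    have hxy : x < y := lt_of_lt_of_le hx.2 hy.1
    rw [Real.rpow_add hy0, ← mul_assoc]
    have h1 : y ^ (2*H-2) ≤ |x - y| ^ (2*H-2) := by
      rw [abs_of_nonpos (by linarith), neg_sub]
      exact Real.rpow_le_rpow_of_nonpos (by linarith) (by linarith [hx.1]) (by linarith)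
    exact mul_le_mul_of_nonneg_left h1
      (mul_nonneg (Real.rpow_nonneg hx.1.le _) (Real.rpow_nonneg hy0.le _))
  rw [lint_prod_Ico p (p+(2*H-2)) 1 b hp (by linarith) one_pos hb] at key
  rw [Real.one_rpow, show p+(2*H-2)+1 = p+2*H-1 by ring] at key
  exact key

lemma tail_upper (p H b : ℝ) (hp : -1 < p) (hH : H < 1) (hα : 0 < p+2*H-1) (hb : 2 ≤ b) :
    fPH p H 1 b ≤ fPH p H 1 2 +
      ENNReal.ofReal (2 ^ (2-2*H)) *
        (ENNReal.ofReal (1/(p+1)) * ENNReal.ofReal ((b ^ (p+2*H-1) - 2 ^ (p+2*H-1))/(p+2*H-1))) := by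
  have split : fPH p H 1 b ≤ fPH p H 1 2 +
      ∫⁻ x in Ioo (0:ℝ) 1, ∫⁻ y in Ico 2 b,
        ENNReal.ofReal (x ^ p * y ^ p * |x - y| ^ (2*H-2)) := by
    unfold fPH
    rw [← lintegral_add_left (meas_inner p (2*H-2) (Ioo 0 2))]
    refine lintegral_mono fun x => ?_
    refine le_trans (lintegral_mono_set fun y hy => ?_) (lintegral_union_le _ _ _)
    rcases lt_or_ge y 2 with h | h
    · exact Or.inl ⟨hy.1, h⟩
    · exact Or.inr ⟨h, hy.2⟩
  refine le_trans split (add_le_add (le_refl _) ?_)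
  have tb : ∫⁻ x in Ioo (0:ℝ) 1, ∫⁻ y in Ico 2 b,
        ENNReal.ofReal (x ^ p * y ^ p * |x - y| ^ (2*H-2))
      ≤ ∫⁻ x in Ioo (0:ℝ) 1, ∫⁻ y in Ico 2 b,
        ENNReal.ofReal (2 ^ (2-2*H) * (x ^ p * y ^ (p+(2*H-2)))) := by
    refine setLIntegral_mono' measurableSet_Ioo fun x hx => ?_
    refine setLIntegral_mono' measurableSet_Ico fun y hy => ?_
    refine ENNReal.ofReal_le_ofReal ?_
    have hy0 : (0:ℝ) < y := lt_of_lt_of_le two_pos hy.1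
    have hxy : x < y := lt_of_lt_of_le (lt_of_lt_of_le hx.2 one_le_two) hy.1
    have h1 : |x - y| ^ (2*H-2) ≤ 2 ^ (2-2*H) * y ^ (2*H-2) := by
      rw [abs_of_nonpos (by linarith), neg_sub]
      have h2 : (y - x) ^ (2*H-2) ≤ (y/2) ^ (2*H-2) :=
        Real.rpow_le_rpow_of_nonpos (by linarith) (by linarith [hx.2, hy.1]) (by linarith)
      refine h2.trans (le_of_eq ?_)
      rw [Real.div_rpow hy0.le two_pos.le, div_eq_mul_inv, ← Real.rpow_neg two_pos.le,
        show -(2*H-2) = 2-2*H by ring, mul_comm]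
    calc x ^ p * y ^ p * |x - y| ^ (2*H-2)
        ≤ x ^ p * y ^ p * (2 ^ (2-2*H) * y ^ (2*H-2)) := by
          exact mul_le_mul_of_nonneg_left h1
            (mul_nonneg (Real.rpow_nonneg hx.1.le _) (Real.rpow_nonneg hy0.le _))
      _ = 2 ^ (2-2*H) * (x ^ p * y ^ (p+(2*H-2))) := by
          rw [Real.rpow_add hy0]; ring
  refine le_trans tb (le_of_eq ?_)
  simp_rw [lint_const_mul (2 ^ (2-2*H)) (Real.rpow_nonneg two_pos.le _) _ (Ico 2 b)]
  rw [lintegral_const_mul' _ _ ENNReal.ofReal_ne_top,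
    lint_prod_Ico p (p+(2*H-2)) 2 b hp (by linarith) two_pos hb,
    show p+(2*H-2)+1 = p+2*H-1 by ring]

lemma unif_bound (p H H₀ : ℝ) (hp : -1 < p) (hH0 : H₀ ≤ H) (hH : H < 1) :
    fPH p H 1 2 ≤ fPH p H₀ 1 2 +
      ENNReal.ofReal (1/(p+1)) * ENNReal.ofReal (2 ^ (p+1)/(p+1)) := by
  rw [← lint_prod_Ioo p p 2 hp hp (by norm_num)]
  unfold fPH
  rw [← lintegral_add_left (meas_inner p (2*H₀-2) (Ioo 0 2))]
  refine setLIntegral_mono' measurableSet_Ioo fun x hx => ?_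
  have key : ∀ y ∈ Ioo (0:ℝ) 2,
      ENNReal.ofReal (x ^ p * y ^ p * |x - y| ^ (2*H-2))
        ≤ ENNReal.ofReal (x ^ p * y ^ p * |x - y| ^ (2*H₀-2)) + ENNReal.ofReal (x ^ p * y ^ p) := by
    intro y hy
    have hxy : 0 ≤ x ^ p * y ^ p :=
      mul_nonneg (Real.rpow_nonneg hx.1.le _) (Real.rpow_nonneg hy.1.le _)
    refine le_trans (ENNReal.ofReal_le_ofReal ?_) (ENNReal.ofReal_add_le)
    rcases eq_or_ne (|x - y|) 0 with h0 | h0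
    · rw [h0, Real.zero_rpow (by linarith), mul_zero]
      positivity
    have ht0 : 0 < |x - y| := (abs_nonneg _).lt_of_ne (Ne.symm h0)
    rcases le_or_gt (|x - y|) 1 with h1 | h1
    · have : |x - y| ^ (2*H-2) ≤ |x - y| ^ (2*H₀-2) :=
        Real.rpow_le_rpow_of_exponent_ge ht0 h1 (by linarith)
      nlinarith [mul_le_mul_of_nonneg_left this hxy]
    · have : |x - y| ^ (2*H-2) ≤ 1 :=
        Real.rpow_le_one_of_one_le_of_nonpos h1.le (by linarith)
      nlinarith [mul_le_mul_of_nonneg_left this hxy,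
        mul_nonneg hxy (Real.rpow_nonneg (abs_nonneg (x - y)) (2*H₀-2))]
  calc (∫⁻ y in Ioo (0:ℝ) 2, ENNReal.ofReal (x ^ p * y ^ p * |x - y| ^ (2*H-2)))
      ≤ ∫⁻ y in Ioo (0:ℝ) 2,
          (ENNReal.ofReal (x ^ p * y ^ p * |x - y| ^ (2*H₀-2)) + ENNReal.ofReal (x ^ p * y ^ p)) :=
        setLIntegral_mono' measurableSet_Ioo key
    _ = (∫⁻ y in Ioo (0:ℝ) 2, ENNReal.ofReal (x ^ p * y ^ p * |x - y| ^ (2*H₀-2)))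
          + ∫⁻ y in Ioo (0:ℝ) 2, ENNReal.ofReal (x ^ p * y ^ p) :=
        lintegral_add_left (measf1 p (2*H₀-2) x) _

lemma fin_aux (p θ : ℝ) (hp : -1 < p) (hθ1 : -1 < θ) (hθ0 : θ < 0) (hpθ : -1 < p + θ)
    (h2 : -1 < 2*p + θ + 1) :
    (∫⁻ x in Ioo (0:ℝ) 1, ∫⁻ y in Ioo (0:ℝ) 2, ENNReal.ofReal (x ^ p * y ^ p * |x - y| ^ θ)) < ⊤ := by
  have hp1 : (0:ℝ) < p + 1 := by linarith
  have hθp1 : (0:ℝ) < θ + 1 := by linarith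
  set Kp : ℝ := 2 ^ (-p) + (3/2:ℝ) ^ p with hKp
  have hKp0 : 0 ≤ Kp := by positivity
  set c1 : ℝ := 2 ^ (-θ) * 2 ^ (-(p+1)) / (p+1) with hc1
  set c2 : ℝ := Kp * 2 * 2 ^ (-(θ+1)) / (θ+1) with hc2
  set c3 : ℝ := 3 ^ (-θ) * (2 ^ (p+θ+1) / (p+θ+1)) with hc3
  have hc10 : 0 ≤ c1 := by
    rw [hc1]
    exact div_nonneg (by positivity) hp1.le
  have hc20 : 0 ≤ c2 := by
    rw [hc2]
    exact div_nonneg (by positivity) hθp1.le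
  have hc30 : 0 ≤ c3 := by
    rw [hc3]
    have h01 : (0:ℝ) < p+θ+1 := by linarith
    positivity
  have inner_bd : ∀ x ∈ Ioo (0:ℝ) 1,
      (∫⁻ y in Ioo (0:ℝ) 2, ENNReal.ofReal (x ^ p * y ^ p * |x - y| ^ θ))
        ≤ ENNReal.ofReal ((c1 + c2) * x ^ (2*p+θ+1)) + ENNReal.ofReal (c3 * x ^ p) := by
    intro x hx
    have hx0 : (0:ℝ) < x := hx.1
    have hx1 : x < 1 := hx.2
    have cover : Ioo (0:ℝ) 2 ⊆ (Ioo 0 (x/2) ∪ Ico (x/2) (3*x/2)) ∪ Ico (3*x/2) 2 := by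
      intro y hy
      rcases lt_or_ge y (x/2) with h | h
      · exact Or.inl (Or.inl ⟨hy.1, h⟩)
      rcases lt_or_ge y (3*x/2) with h' | h'
      · exact Or.inl (Or.inr ⟨h, h'⟩)
      · exact Or.inr ⟨h', hy.2⟩
    -- Piece 1
    have P1 : (∫⁻ y in Ioo (0:ℝ) (x/2), ENNReal.ofReal (x ^ p * y ^ p * |x - y| ^ θ))
        ≤ ENNReal.ofReal (c1 * x ^ (2*p+θ+1)) := by
      have pw : ∀ y ∈ Ioo (0:ℝ) (x/2),
          ENNReal.ofReal (x ^ p * y ^ p * |x - y| ^ θ)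
            ≤ ENNReal.ofReal ((x ^ p * (x/2) ^ θ) * y ^ p) := by
        intro y hy
        refine ENNReal.ofReal_le_ofReal ?_
        have h1 : |x - y| ^ θ ≤ (x/2) ^ θ := by
          rw [abs_of_nonneg (by linarith [hy.2] : (0:ℝ) ≤ x - y)]
          exact Real.rpow_le_rpow_of_nonpos (by linarith) (by linarith [hy.2]) hθ0.le
        calc x ^ p * y ^ p * |x - y| ^ θ
            ≤ x ^ p * y ^ p * (x/2) ^ θ := by
              exact mul_le_mul_of_nonneg_left h1
                (mul_nonneg (Real.rpow_nonneg hx0.le _) (Real.rpow_nonneg hy.1.le _))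
          _ = (x ^ p * (x/2) ^ θ) * y ^ p := by ring
      calc (∫⁻ y in Ioo (0:ℝ) (x/2), ENNReal.ofReal (x ^ p * y ^ p * |x - y| ^ θ))
          ≤ ∫⁻ y in Ioo (0:ℝ) (x/2), ENNReal.ofReal ((x ^ p * (x/2) ^ θ) * y ^ p) :=
            setLIntegral_mono' measurableSet_Ioo pw
        _ = ENNReal.ofReal (x ^ p * (x/2) ^ θ) * ENNReal.ofReal ((x/2) ^ (p+1) / (p+1)) := by
            rw [lint_const_mul _ (by positivity) _ _, lint_pow_Ioo p (x/2) hp (by positivity)]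
        _ = ENNReal.ofReal (c1 * x ^ (2*p+θ+1)) := by
            rw [← ENNReal.ofReal_mul (by positivity)]
            congr 1
            have e2θ : ((2:ℝ)^θ) ≠ 0 := (Real.rpow_pos_of_pos two_pos θ).ne'
            have e2p : ((2:ℝ)^(p+1)) ≠ 0 := (Real.rpow_pos_of_pos two_pos (p+1)).ne'
            rw [hc1, show 2*p+θ+1 = p+θ+(p+1) by ring, Real.rpow_add hx0, Real.rpow_add hx0,
              Real.div_rpow hx0.le two_pos.le, Real.div_rpow hx0.le two_pos.le,
              Real.rpow_neg two_pos.le θ, Real.rpow_neg two_pos.le (p+1)]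
            field_simp
    -- Piece 2
    have P2 : (∫⁻ y in Ico (x/2) (3*x/2), ENNReal.ofReal (x ^ p * y ^ p * |x - y| ^ θ))
        ≤ ENNReal.ofReal (c2 * x ^ (2*p+θ+1)) := by
      have pw : ∀ y ∈ Ico (x/2) (3*x/2),
          ENNReal.ofReal (x ^ p * y ^ p * |x - y| ^ θ)
            ≤ ENNReal.ofReal ((Kp * x ^ (2*p)) * |x - y| ^ θ) := by
        intro y hy
        refine ENNReal.ofReal_le_ofReal ?_
        have hy0 : (0:ℝ) < y := lt_of_lt_of_le (by positivity) hy.1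
        have hyp : y ^ p ≤ Kp * x ^ p := by
          rcases le_or_gt p 0 with hps | hps
          · have h5 : y ^ p ≤ (x/2) ^ p :=
              Real.rpow_le_rpow_of_nonpos (by positivity) hy.1 hps
            rw [Real.div_rpow hx0.le two_pos.le, div_eq_mul_inv] at h5
            refine h5.trans ?_
            rw [hKp, Real.rpow_neg two_pos.le p]
            nlinarith [Real.rpow_nonneg (by norm_num : (0:ℝ) ≤ 3/2) p, Real.rpow_nonneg hx0.le p]
          · have h5 : y ^ p ≤ (3*x/2) ^ p :=
              Real.rpow_le_rpow hy0.le hy.2.le hps.le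
            rw [show 3*x/2 = (3/2)*x by ring, Real.mul_rpow (by norm_num) hx0.le] at h5
            refine h5.trans ?_
            rw [hKp]
            nlinarith [Real.rpow_pos_of_pos two_pos (-p), Real.rpow_nonneg hx0.le p]
        calc x ^ p * y ^ p * |x - y| ^ θ
            ≤ x ^ p * (Kp * x ^ p) * |x - y| ^ θ := by
              refine mul_le_mul_of_nonneg_right ?_ (Real.rpow_nonneg (abs_nonneg _) θ)
              exact mul_le_mul_of_nonneg_left hyp (Real.rpow_nonneg hx0.le p)
          _ = (Kp * x ^ (2*p)) * |x - y| ^ θ := by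
              rw [show 2*p = p + p by ring, Real.rpow_add hx0]; ring
      have mid : (∫⁻ y in Ico (x/2) (3*x/2), ENNReal.ofReal (|x - y| ^ θ))
          ≤ ENNReal.ofReal (2 * ((x/2) ^ (θ+1) / (θ+1))) := by
        have cover2 : Ico (x/2) (3*x/2) ⊆ Icc (x - x/2) x ∪ Icc x (x + x/2) := by
          intro y hy
          rcases le_or_gt y x with h | h
          · exact Or.inl ⟨by linarith [hy.1], h⟩
          · exact Or.inr ⟨h.le, by linarith [hy.2]⟩
        refine le_trans (lintegral_mono_set cover2) (le_trans (lintegral_union_le _ _ _) ?_)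
        have left : (∫⁻ y in Icc (x - x/2) x, ENNReal.ofReal (|x - y| ^ θ))
            = ENNReal.ofReal ((x/2) ^ (θ+1) / (θ+1)) := by
          rw [setLIntegral_congr_fun measurableSet_Icc
            ((fun y (hy : y ∈ Icc (x - x/2) x) => by
              rw [abs_of_nonneg (by linarith [hy.2] : (0:ℝ) ≤ x - y)])),
            lint_sub_left θ x (x/2) hθ1 (by positivity)]
        have right : (∫⁻ y in Icc x (x + x/2), ENNReal.ofReal (|x - y| ^ θ))
            = ENNReal.ofReal ((x/2) ^ (θ+1) / (θ+1)) := by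
          rw [setLIntegral_congr_fun measurableSet_Icc
            ((fun y (hy : y ∈ Icc x (x + x/2)) => by
              rw [abs_of_nonpos (by linarith [hy.1] : x - y ≤ 0), neg_sub])),
            lint_sub_right θ x (x/2) hθ1 (by positivity)]
        rw [left, right, ← ENNReal.ofReal_add (by positivity) (by positivity)]
        exact ENNReal.ofReal_le_ofReal (le_of_eq (by ring))
      calc (∫⁻ y in Ico (x/2) (3*x/2), ENNReal.ofReal (x ^ p * y ^ p * |x - y| ^ θ))
          ≤ ∫⁻ y in Ico (x/2) (3*x/2), ENNReal.ofReal ((Kp * x ^ (2*p)) * |x - y| ^ θ) :=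
            setLIntegral_mono' measurableSet_Ico pw
        _ = ENNReal.ofReal (Kp * x ^ (2*p)) * ∫⁻ y in Ico (x/2) (3*x/2), ENNReal.ofReal (|x - y| ^ θ) :=
            lint_const_mul _ (by positivity) _ _
        _ ≤ ENNReal.ofReal (Kp * x ^ (2*p)) * ENNReal.ofReal (2 * ((x/2) ^ (θ+1) / (θ+1))) :=
            mul_le_mul' le_rfl mid
        _ = ENNReal.ofReal (c2 * x ^ (2*p+θ+1)) := by
            rw [← ENNReal.ofReal_mul (by positivity)]
            congr 1
            have e2θ : ((2:ℝ)^(θ+1)) ≠ 0 := (Real.rpow_pos_of_pos two_pos (θ+1)).ne'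
            rw [hc2, show 2*p+θ+1 = 2*p+(θ+1) by ring, Real.rpow_add hx0,
              Real.div_rpow hx0.le two_pos.le, Real.rpow_neg two_pos.le (θ+1)]
            field_simp
    -- Piece 3
    have P3 : (∫⁻ y in Ico (3*x/2) 2, ENNReal.ofReal (x ^ p * y ^ p * |x - y| ^ θ))
        ≤ ENNReal.ofReal (c3 * x ^ p) := by
      have pw : ∀ y ∈ Ico (3*x/2) 2,
          ENNReal.ofReal (x ^ p * y ^ p * |x - y| ^ θ)
            ≤ ENNReal.ofReal ((3 ^ (-θ) * x ^ p) * y ^ (p+θ)) := by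
        intro y hy
        refine ENNReal.ofReal_le_ofReal ?_
        have hy0 : (0:ℝ) < y := lt_of_lt_of_le (by positivity) hy.1
        have hxy : x < y := by linarith [hy.1]
        have h1 : |x - y| ^ θ ≤ 3 ^ (-θ) * y ^ θ := by
          rw [abs_of_nonpos (by linarith), neg_sub]
          have h2 : (y - x) ^ θ ≤ (y/3) ^ θ :=
            Real.rpow_le_rpow_of_nonpos (by positivity) (by linarith [hy.1]) hθ0.le
          refine h2.trans (le_of_eq ?_)
          rw [Real.div_rpow hy0.le (by norm_num : (0:ℝ) ≤ 3), Real.rpow_neg (by norm_num : (0:ℝ) ≤ 3),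
            div_eq_mul_inv, mul_comm]
        calc x ^ p * y ^ p * |x - y| ^ θ
            ≤ x ^ p * y ^ p * (3 ^ (-θ) * y ^ θ) := by
              exact mul_le_mul_of_nonneg_left h1
                (mul_nonneg (Real.rpow_nonneg hx0.le _) (Real.rpow_nonneg hy0.le _))
          _ = (3 ^ (-θ) * x ^ p) * y ^ (p+θ) := by
              rw [Real.rpow_add hy0]; ring
      calc (∫⁻ y in Ico (3*x/2) 2, ENNReal.ofReal (x ^ p * y ^ p * |x - y| ^ θ))
          ≤ ∫⁻ y in Ico (3*x/2) 2, ENNReal.ofReal ((3 ^ (-θ) * x ^ p) * y ^ (p+θ)) :=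
            setLIntegral_mono' measurableSet_Ico pw
        _ ≤ ∫⁻ y in Ioo (0:ℝ) 2, ENNReal.ofReal ((3 ^ (-θ) * x ^ p) * y ^ (p+θ)) := by
            refine lintegral_mono_set fun y hy => ⟨lt_of_lt_of_le (by positivity) hy.1, hy.2⟩
        _ = ENNReal.ofReal (3 ^ (-θ) * x ^ p) * ENNReal.ofReal (2 ^ (p+θ+1) / (p+θ+1)) := by
            rw [lint_const_mul _ (by positivity) _ _, lint_pow_Ioo (p+θ) 2 hpθ (by norm_num)]
        _ = ENNReal.ofReal (c3 * x ^ p) := by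
            rw [← ENNReal.ofReal_mul (by positivity)]
            congr 1
            rw [hc3]; ring
    refine le_trans (le_trans (lintegral_mono_set cover)
      (le_trans (lintegral_union_le _ _ _) (add_le_add (lintegral_union_le _ _ _) le_rfl))) ?_
    calc (∫⁻ y in Ioo (0:ℝ) (x/2), ENNReal.ofReal (x ^ p * y ^ p * |x - y| ^ θ))
          + (∫⁻ y in Ico (x/2) (3*x/2), ENNReal.ofReal (x ^ p * y ^ p * |x - y| ^ θ))
          + (∫⁻ y in Ico (3*x/2) 2, ENNReal.ofReal (x ^ p * y ^ p * |x - y| ^ θ))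
        ≤ ENNReal.ofReal (c1 * x ^ (2*p+θ+1)) + ENNReal.ofReal (c2 * x ^ (2*p+θ+1))
            + ENNReal.ofReal (c3 * x ^ p) := add_le_add (add_le_add P1 P2) P3
      _ = ENNReal.ofReal ((c1 + c2) * x ^ (2*p+θ+1)) + ENNReal.ofReal (c3 * x ^ p) := by
          rw [← ENNReal.ofReal_add (by positivity) (by positivity)]
          congr 2
          ring
  have total : (∫⁻ x in Ioo (0:ℝ) 1, ∫⁻ y in Ioo (0:ℝ) 2, ENNReal.ofReal (x ^ p * y ^ p * |x - y| ^ θ))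
      ≤ ∫⁻ x in Ioo (0:ℝ) 1,
          (ENNReal.ofReal ((c1 + c2) * x ^ (2*p+θ+1)) + ENNReal.ofReal (c3 * x ^ p)) :=
    setLIntegral_mono' measurableSet_Ioo inner_bd
  refine lt_of_le_of_lt total ?_
  have measp : ∀ K c : ℝ, Measurable fun x : ℝ => ENNReal.ofReal (K * x ^ c) := by
    intro K c
    have m1 : Measurable fun x : ℝ => x ^ c := by
      measurability
    exact (measurable_const.mul m1).ennreal_ofReal
  rw [lintegral_add_left (measp (c1+c2) (2*p+θ+1))]
  rw [lint_const_mul _ (by positivity) _ _, lint_const_mul _ hc30 _ _,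
    lint_pow_Ioo _ _ h2 zero_le_one, lint_pow_Ioo _ _ hp zero_le_one]
  exact ENNReal.add_lt_top.2 ⟨ENNReal.mul_lt_top ENNReal.ofReal_lt_top ENNReal.ofReal_lt_top,
    ENNReal.mul_lt_top ENNReal.ofReal_lt_top ENNReal.ofReal_lt_top⟩

theorem stmt_6 (p τ : ℝ) (hp : -1 < p) (hτ : 0 < τ) :
    Filter.Tendsto
      (fun H : ℝ =>
        (fPH p H 1 (Real.exp (τ / (1 - H)))).toReal /
          Real.exp (τ * (p + 2*H - 1) / (1 - H)))
      (nhdsWithin 1 (Ioo (1/2 : ℝ) 1)) (nhds (1 / (p + 1)^2)) := by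
  have hp1 : (0:ℝ) < p + 1 := by linarith
  set l := nhdsWithin (1:ℝ) (Ioo (1/2 : ℝ) 1) with hl
  set H₀ : ℝ := max (3/4) ((3-p)/4) with hH₀
  have hH₀a : (3/4:ℝ) ≤ H₀ := le_max_left _ _
  have hH₀b : (3-p)/4 ≤ H₀ := le_max_right _ _
  have hH₀1 : H₀ < 1 := max_lt (by norm_num) (by linarith)
  have hfin2 : fPH p H₀ 1 2 < ⊤ := by
    unfold fPH
    exact fin_aux p (2*H₀-2) hp (by linarith) (by linarith) (by linarith) (by linarith)
  set C : ℝ≥0∞ := fPH p H₀ 1 2 + ENNReal.ofReal (1/(p+1)) * ENNReal.ofReal (2 ^ (p+1)/(p+1))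
    with hCdef
  have hC : C ≠ ⊤ :=
    (ENNReal.add_lt_top.2 ⟨hfin2, ENNReal.mul_lt_top ENNReal.ofReal_lt_top ENNReal.ofReal_lt_top⟩).ne
  set D : ℝ → ℝ := fun H => Real.exp (τ * (p + 2*H - 1) / (1 - H)) with hD
  set α : ℝ → ℝ := fun H => p + 2*H - 1 with hαdef
  set b : ℝ → ℝ := fun H => Real.exp (τ / (1 - H)) with hbdef
  have hbα : ∀ H, b H ^ (α H) = D H := by
    intro H
    simp only [hbdef, hD]
    rw [Real.rpow_def_of_pos (Real.exp_pos _), Real.log_exp]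
    congr 1
    ring
  -- basic filter limits
  have hid : Filter.Tendsto (fun H : ℝ => H) l (𝓝 1) :=
    Filter.tendsto_id.mono_right nhdsWithin_le_nhds
  have hmem : ∀ᶠ H in l, H ∈ Ioo (1/2:ℝ) 1 := eventually_mem_nhdsWithin
  have hs : Filter.Tendsto (fun H : ℝ => τ / (1 - H)) l Filter.atTop := by
    have h1 : Filter.Tendsto (fun H : ℝ => 1 - H) l (nhdsWithin 0 (Ioi 0)) := by
      rw [tendsto_nhdsWithin_iff]
      constructor
      · have hc : Filter.Tendsto (fun H : ℝ => 1 - H) (𝓝 1) (𝓝 (1 - 1)) :=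
          ((continuous_const.sub continuous_id).tendsto 1)
        rw [sub_self] at hc
        exact hc.comp hid
      · exact hmem.mono fun H hH => by simp [sub_pos, hH.2]
    have h2 := tendsto_inv_nhdsGT_zero.comp h1
    have h3 := h2.const_mul_atTop hτ
    simpa [div_eq_mul_inv, Function.comp] using h3
  have hα : Filter.Tendsto α l (𝓝 (p+1)) := by
    have hc : Continuous α := by
      rw [hαdef]
      exact (continuous_const.add (continuous_const.mul continuous_id)).sub continuous_const
    have h2 := (hc.tendsto 1).comp hid
    have : α 1 = p + 1 := by simp only [hαdef]; ring
    rwa [this] at h2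
  have hDtop : Filter.Tendsto D l Filter.atTop := by
    have heq : D = fun H => Real.exp ((α H) * (τ / (1 - H))) := by
      funext H; simp only [hD, hαdef]; congr 1; ring
    rw [heq]
    exact Real.tendsto_exp_atTop.comp (hα.pos_mul_atTop (by linarith) hs)
  have hDinv : Filter.Tendsto (fun H => (D H)⁻¹) l (𝓝 0) := hDtop.inv_tendsto_atTop
  have hb2 : ∀ᶠ H in l, 2 ≤ b H := (Real.tendsto_exp_atTop.comp hs).eventually_ge_atTop 2
  have hlt : ∀ᶠ H in l, H₀ < H :=
    Filter.Eventually.filter_mono nhdsWithin_le_nhds (eventually_gt_nhds hH₀1)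
  have hev : ∀ᶠ H in l, H₀ < H ∧ H ∈ Ioo (1/2:ℝ) 1 ∧ 2 ≤ b H :=
    hlt.and (hmem.and hb2)
  have hα0ev : ∀ᶠ H in l, 0 < α H := by
    refine hlt.mono fun H hH => ?_
    simp only [hαdef]; linarith
  -- squeeze
  set Lo : ℝ → ℝ := fun H => ((1/(p+1)) * ((D H - 1)/(α H))) / D H with hLodef
  set Up : ℝ → ℝ := fun H =>
    (C.toReal + 2 ^ (2-2*H) * ((1/(p+1)) * ((D H - 2 ^ (α H))/(α H)))) / D H with hUpdef
  have key : ∀ H, H₀ < H → H ∈ Ioo (1/2:ℝ) 1 → 2 ≤ b H →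
      Lo H ≤ (fPH p H 1 (b H)).toReal / D H ∧ (fPH p H 1 (b H)).toReal / D H ≤ Up H := by
    intro H hH0 hIoo hb
    have hH1 : H < 1 := hIoo.2
    have hα0 : 0 < α H := by simp only [hαdef]; linarith
    have hb1 : (1:ℝ) ≤ b H := le_trans one_le_two hb
    have hD0 : 0 < D H := Real.exp_pos _
    have hDge1 : (1:ℝ) ≤ D H := by
      rw [← hbα H]
      calc (1:ℝ) = 1 ^ (α H) := (Real.one_rpow _).symm
        _ ≤ b H ^ (α H) := Real.rpow_le_rpow zero_le_one hb1 hα0.le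
    have hDge2 : (2:ℝ) ^ (α H) ≤ D H := by
      rw [← hbα H]
      exact Real.rpow_le_rpow (by norm_num) hb hα0.le
    have lower := tail_lower p H (b H) hp hH1 hα0 hb1
    rw [show p + 2*H - 1 = α H from rfl, hbα H] at lower
    have upper : fPH p H 1 (b H) ≤ C +
        ENNReal.ofReal (2 ^ (2-2*H)) *
          (ENNReal.ofReal (1/(p+1)) * ENNReal.ofReal ((D H - 2 ^ (α H))/(α H))) := by
      have u1 := tail_upper p H (b H) hp hH1 hα0 hb
      rw [show p + 2*H - 1 = α H from rfl, hbα H] at u1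
      refine u1.trans (add_le_add ?_ le_rfl)
      exact unif_bound p H H₀ hp hH0.le hH1
    have hBne : C + ENNReal.ofReal (2 ^ (2-2*H)) *
        (ENNReal.ofReal (1/(p+1)) * ENNReal.ofReal ((D H - 2 ^ (α H))/(α H))) ≠ ⊤ :=
      (ENNReal.add_lt_top.2 ⟨hC.lt_top, ENNReal.mul_lt_top ENNReal.ofReal_lt_top
        (ENNReal.mul_lt_top ENNReal.ofReal_lt_top ENNReal.ofReal_lt_top)⟩).ne
    have hfPHne : fPH p H 1 (b H) ≠ ⊤ := (lt_of_le_of_lt upper hBne.lt_top).ne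
    have hd1 : 0 ≤ (D H - 1)/(α H) := div_nonneg (by linarith) hα0.le
    have hd2 : 0 ≤ (D H - 2 ^ (α H))/(α H) := div_nonneg (by linarith) hα0.le
    constructor
    · have hnum : (1/(p+1)) * ((D H - 1)/(α H)) ≤ (fPH p H 1 (b H)).toReal := by
        have h1 := ENNReal.toReal_mono hfPHne lower
        rwa [ENNReal.toReal_mul, ENNReal.toReal_ofReal (by positivity),
          ENNReal.toReal_ofReal hd1] at h1
      rw [hLodef]
      exact div_le_div_of_nonneg_right hnum hD0.le
    · have hnum : (fPH p H 1 (b H)).toReal ≤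
          C.toReal + 2 ^ (2-2*H) * ((1/(p+1)) * ((D H - 2 ^ (α H))/(α H))) := by
        have h1 := ENNReal.toReal_mono hBne upper
        rwa [ENNReal.toReal_add hC (ENNReal.mul_lt_top ENNReal.ofReal_lt_top
            (ENNReal.mul_lt_top ENNReal.ofReal_lt_top ENNReal.ofReal_lt_top)).ne,
          ENNReal.toReal_mul, ENNReal.toReal_mul,
          ENNReal.toReal_ofReal (Real.rpow_nonneg two_pos.le _),
          ENNReal.toReal_ofReal (by positivity),
          ENNReal.toReal_ofReal hd2] at h1
      rw [hUpdef]
      exact div_le_div_of_nonneg_right hnum hD0.le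
  have hLoEv : ∀ᶠ H in l, Lo H ≤ (fPH p H 1 (b H)).toReal / D H :=
    hev.mono fun H h => (key H h.1 h.2.1 h.2.2).1
  have hUpEv : ∀ᶠ H in l, (fPH p H 1 (b H)).toReal / D H ≤ Up H :=
    hev.mono fun H h => (key H h.1 h.2.1 h.2.2).2
  have hD0all : ∀ H, 0 < D H := fun H => Real.exp_pos _
  -- limit of Lo
  have hLoT : Filter.Tendsto Lo l (𝓝 (1/(p+1)^2)) := by
    have heq : ∀ᶠ H in l, (1/(p+1)) * ((1 - (D H)⁻¹)/(α H)) = Lo H := by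
      refine hα0ev.mono fun H hα0 => ?_
      have hD0 := hD0all H
      rw [hLodef]
      dsimp only
      rw [eq_div_iff hD0.ne']
      field_simp
    have T1 : Filter.Tendsto (fun H => (1/(p+1)) * ((1 - (D H)⁻¹)/(α H))) l
        (𝓝 ((1/(p+1)) * ((1 - 0)/(p+1)))) :=
      tendsto_const_nhds.mul ((tendsto_const_nhds.sub hDinv).div hα (by linarith))
    have hval : (1/(p+1)) * ((1 - (0:ℝ))/(p+1)) = 1/(p+1)^2 := by
      field_simp
      ring
    rw [hval] at T1
    exact T1.congr' heq
  -- limit of Up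
  have h2exp : Filter.Tendsto (fun H : ℝ => (2:ℝ) ^ (2-2*H)) l (𝓝 1) := by
    have hrw : (fun H : ℝ => (2:ℝ) ^ (2-2*H)) = fun H => Real.exp (Real.log 2 * (2-2*H)) :=
      funext fun H => Real.rpow_def_of_pos two_pos _
    rw [hrw]
    have hc : Continuous fun H : ℝ => Real.log 2 * (2-2*H) :=
      continuous_const.mul (continuous_const.sub (continuous_const.mul continuous_id))
    have h4 := (hc.tendsto 1).comp hid
    have h5 : Real.log 2 * (2-2*(1:ℝ)) = 0 := by ring
    rw [h5] at h4
    have h6 := (Real.continuous_exp.tendsto 0).comp h4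
    rwa [Real.exp_zero] at h6
  have h2α : Filter.Tendsto (fun H : ℝ => (2:ℝ) ^ (α H)) l (𝓝 ((2:ℝ) ^ (p+1))) := by
    have hrw : (fun H : ℝ => (2:ℝ) ^ (α H)) = fun H => Real.exp (Real.log 2 * (α H)) :=
      funext fun H => Real.rpow_def_of_pos two_pos _
    rw [hrw, show (2:ℝ) ^ (p+1) = Real.exp (Real.log 2 * (p+1)) from Real.rpow_def_of_pos two_pos _]
    exact (Real.continuous_exp.tendsto _).comp (tendsto_const_nhds.mul hα)
  have hUpT : Filter.Tendsto Up l (𝓝 (1/(p+1)^2)) := by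
    have heq : ∀ᶠ H in l,
        C.toReal * (D H)⁻¹ + (2:ℝ) ^ (2-2*H) * ((1/(p+1)) * ((1 - 2 ^ (α H) * (D H)⁻¹)/(α H)))
          = Up H := by
      refine hα0ev.mono fun H hα0 => ?_
      have hD0 := hD0all H
      rw [hUpdef]
      dsimp only
      rw [eq_div_iff hD0.ne']
      field_simp
    have T2 : Filter.Tendsto (fun H =>
        C.toReal * (D H)⁻¹ + (2:ℝ) ^ (2-2*H) * ((1/(p+1)) * ((1 - 2 ^ (α H) * (D H)⁻¹)/(α H)))) l
        (𝓝 (C.toReal * 0 + 1 * ((1/(p+1)) * ((1 - 2 ^ (p+1) * 0)/(p+1))))) :=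
      (hDinv.const_mul C.toReal).add (h2exp.mul (tendsto_const_nhds.mul
        ((tendsto_const_nhds.sub (h2α.mul hDinv)).div hα (by linarith))))
    have hval : C.toReal * 0 + 1 * ((1/(p+1)) * ((1 - (2:ℝ) ^ (p+1) * 0)/(p+1))) = 1/(p+1)^2 := by
      field_simp
      ring
    rw [hval] at T2
    exact T2.congr' heq
  exact tendsto_of_tendsto_of_tendsto_of_le_of_le' hLoT hUpT hLoEv hUpEv
end

section
/- Let $I:[0,\infty)\to[0,\infty)$ be non decreasing with $I(T)\le T$ for all $T$ and $\lim_{T\to\infty}I(T)=\infty$. Then $\liminf_{T\to\infty}\frac{I(T)}{I(T/2)^2}=0$; equivalently, there exists a sequence $T_k\to\infty$ with $I(T_k)/I(T_k/2)^2\to 0$. -/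
open Filter Set

lemma two_mul_le_two_pow' (k : ℕ) : 2 * k ≤ 2 ^ k := by
  induction k with
  | zero => simp
  | succ n ih =>
    rcases Nat.eq_zero_or_pos n with h | h
    · subst h; norm_num
    · have h2 : 2 ≤ 2 ^ n := by
        calc 2 = 2 ^ 1 := rfl
        _ ≤ 2 ^ n := Nat.pow_le_pow_right (by norm_num) h
      calc 2 * (n + 1) = 2 * n + 2 := by ring
      _ ≤ 2 ^ n + 2 ^ n := Nat.add_le_add ih h2
      _ = 2 ^ (n + 1) := by ring

lemma key_lemma (I : ℝ → ℝ)
    (hnonneg : ∀ T, 0 ≤ T → 0 ≤ I T)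
    (hle : ∀ T, 0 ≤ T → I T ≤ T)
    (hdiv : Tendsto I atTop atTop)
    (ε : ℝ) (hε : 0 < ε) (M : ℝ) :
    ∃ T, M ≤ T ∧ 0 ≤ T ∧ I T < ε * (I (T / 2)) ^ 2 := by
  by_contra h
  push_neg at h
  -- h : ∀ T, M ≤ T → 0 ≤ T → ε * I (T/2) ^ 2 ≤ I T
  obtain ⟨T0, hT0⟩ := (tendsto_atTop.mp hdiv (2 / ε)).exists_forall_of_atTop
  set S : ℝ := max T0 (max M 1) with hS
  have hS1 : (1 : ℝ) ≤ S := le_max_of_le_right (le_max_right _ _)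
  have hSM : M ≤ S := le_max_of_le_right (le_max_left _ _)
  have hS0 : (0 : ℝ) ≤ S := by linarith
  have hIS : 2 / ε ≤ I S := hT0 S (le_max_left _ _)
  have claim : ∀ k : ℕ, (2 : ℝ) ^ (2 ^ k) ≤ ε * I (2 ^ k * S) := by
    intro k
    induction k with
    | zero =>
      simp only [pow_zero, pow_one, one_mul]
      have := (div_le_iff₀ hε).mp hIS
      linarith [mul_comm (I S) ε]
    | succ n ih =>
      have hT : (2 : ℝ) ^ (n + 1) * S ≥ S := by
        have : (1 : ℝ) ≤ 2 ^ (n + 1) := one_le_pow₀ (by norm_num)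
        nlinarith
      have hTM : M ≤ 2 ^ (n + 1) * S := le_trans hSM hT
      have hT0' : (0 : ℝ) ≤ 2 ^ (n + 1) * S := by positivity
      have hhalf : (2 : ℝ) ^ (n + 1) * S / 2 = 2 ^ n * S := by
        rw [pow_succ]; ring
      have hh := h (2 ^ (n + 1) * S) hTM hT0'
      rw [hhalf] at hh
      have h1 : (ε * I (2 ^ n * S)) ^ 2 ≤ ε * I (2 ^ (n + 1) * S) := by
        have : ε * (ε * I (2 ^ n * S) ^ 2) ≤ ε * I (2 ^ (n + 1) * S) :=
          mul_le_mul_of_nonneg_left hh hε.le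
        calc (ε * I (2 ^ n * S)) ^ 2 = ε * (ε * I (2 ^ n * S) ^ 2) := by ring
        _ ≤ _ := this
      have h2 : ((2 : ℝ) ^ (2 ^ n)) ^ 2 ≤ (ε * I (2 ^ n * S)) ^ 2 := by
        apply pow_le_pow_left₀ (by positivity) ih
      calc (2 : ℝ) ^ (2 ^ (n + 1)) = ((2 : ℝ) ^ (2 ^ n)) ^ 2 := by
            rw [← pow_mul]; ring_nf
      _ ≤ (ε * I (2 ^ n * S)) ^ 2 := h2
      _ ≤ ε * I (2 ^ (n + 1) * S) := h1
  -- Now derive contradiction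
  obtain ⟨n, hn⟩ := exists_nat_ge (ε * S)
  obtain ⟨k, hk⟩ : ∃ k : ℕ, k = n + 1 := ⟨n + 1, rfl⟩
  have hk1 : ε * S < 2 ^ k := by
    have : (n : ℝ) < 2 ^ k := by
      have : n < 2 ^ k := hk ▸ Nat.lt_trans (Nat.lt_succ_self n) (Nat.lt_two_pow_self (n := n + 1))
      exact_mod_cast this
    linarith
  have hbig : (2 : ℝ) ^ k * (ε * S) < 2 ^ (2 ^ k) := by
    have h2k : (2 : ℝ) ^ (2 * k) ≤ 2 ^ (2 ^ k) :=
      pow_le_pow_right₀ (by norm_num) (two_mul_le_two_pow' k)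
    have : (2 : ℝ) ^ k * (ε * S) < 2 ^ k * 2 ^ k :=
      mul_lt_mul_of_pos_left hk1 (by positivity)
    calc (2 : ℝ) ^ k * (ε * S) < 2 ^ k * 2 ^ k := this
    _ = 2 ^ (2 * k) := by rw [two_mul, pow_add]
    _ ≤ 2 ^ (2 ^ k) := h2k
  have hub : ε * I (2 ^ k * S) ≤ ε * (2 ^ k * S) :=
    mul_le_mul_of_nonneg_left (hle _ (by positivity)) hε.le
  have := claim k
  nlinarith

theorem stmt_13 (I : ℝ → ℝ)
    (hmono : MonotoneOn I (Ici 0))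
    (hnonneg : ∀ T, 0 ≤ T → 0 ≤ I T)
    (hle : ∀ T, 0 ≤ T → I T ≤ T)
    (hdiv : Tendsto I atTop atTop) :
    ∃ T : ℕ → ℝ, Tendsto T atTop atTop ∧
      Tendsto (fun k => I (T k) / (I (T k / 2)) ^ 2) atTop (nhds 0) := by
  have key : ∀ k : ℕ, ∃ T : ℝ, (k : ℝ) ≤ T ∧ 0 ≤ T ∧
      I T < (1 / (k + 1)) * (I (T / 2)) ^ 2 := fun k =>
    key_lemma I hnonneg hle hdiv (1 / (k + 1)) (by positivity) k
  choose T hTk hT0 hTlt using key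
  refine ⟨T, ?_, ?_⟩
  · exact tendsto_atTop_mono hTk tendsto_natCast_atTop_atTop
  · apply tendsto_of_tendsto_of_tendsto_of_le_of_le (g := fun _ => (0 : ℝ))
      (h := fun k : ℕ => 1 / ((k : ℝ) + 1)) tendsto_const_nhds
      tendsto_one_div_add_atTop_nhds_zero_nat
    · intro k
      exact div_nonneg (hnonneg _ (hT0 k)) (by positivity)
    · intro k
      by_cases hz : I (T k / 2) = 0
      · simp [hz]
        positivity
      · have hpos : 0 < (I (T k / 2)) ^ 2 := by
          have := hnonneg (T k / 2) (by linarith [hT0 k])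
          positivity
        exact le_of_lt ((div_lt_iff₀ hpos).mpr (by linarith [hTlt k]))
end

section
/- Let $H\in(1/2,1)$, $p+H>0$, and let $\sigma,\rho$ be as in the non summable setting with $\sigma(\lceil y\rceil)\le C y^p$ for $y\ge1$ and $\rho(\lceil x\rceil-\lceil y\rceil)\le C|x-y|^{2H-2}$. Then there is a constant $C'$ such that for all $u\ge1$ and $\tau\in[0,1]$: $F(ue^\tau,ue^\tau)-F(u,ue^\tau)\le C' u^{2p+2H}\tau$, where $F(\ell_1,\ell_2)=\int_0^{\ell_1}\int_0^{\ell_2}\sigma(\lceil x\rceil)\sigma(\lceil y\rceil)\rho(\lceil x\rceil-\lceil y\rceil)dxdy$. -/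
open MeasureTheory Real Set
open scoped ENNReal

/-- `F(ℓ₁,ℓ₂) = ∫_0^{ℓ₁} ∫_0^{ℓ₂} σ(⌈x⌉) σ(⌈y⌉) ρ(⌈x⌉-⌈y⌉) dx dy`. -/
noncomputable def Fcov (σ : ℕ → ℝ) (ρ : ℤ → ℝ) (ℓ₁ ℓ₂ : ℝ) : ℝ :=
  ∫ x in Ioo (0:ℝ) ℓ₁, ∫ y in Ioo (0:ℝ) ℓ₂,
    σ (⌈x⌉.toNat) * σ (⌈y⌉.toNat) * ρ (⌈x⌉ - ⌈y⌉)

private lemma aux_ceil_one {y : ℝ} (h0 : 0 < y) (h1 : y ≤ 1) : ⌈y⌉ = 1 := by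
  have ha : ⌈y⌉ ≤ 1 := by
    rw [Int.ceil_le]; exact_mod_cast h1
  have hb : 0 < ⌈y⌉ := Int.ceil_pos.mpr h0
  omega

private lemma aux_ceil_dist (x y : ℝ) : |x - y - ((⌈x⌉ : ℝ) - (⌈y⌉ : ℝ))| < 1 := by
  have h1 := Int.le_ceil x
  have h2 := Int.ceil_lt_add_one x
  have h3 := Int.le_ceil y
  have h4 := Int.ceil_lt_add_one y
  rw [abs_lt]; constructor <;> linarith

private lemma aux_mul3 (a b c A B C₀ : ℝ) (ha : 0 ≤ a) (hb : 0 ≤ b) (hc : 0 ≤ c)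
    (hA : a ≤ A) (hB : b ≤ B) (hC₀ : c ≤ C₀) : a * b * c ≤ A * B * C₀ := by
  have h1 : a * b ≤ A * B := mul_le_mul hA hB hb (le_trans ha hA)
  exact mul_le_mul h1 hC₀ hc (mul_nonneg (le_trans ha hA) (le_trans hb hB))

private lemma aux_half_rpow {H : ℝ} : ((1:ℝ)/2) ^ (2*H-2) = 2 ^ (2-2*H) := by
  rw [one_div, Real.inv_rpow (by norm_num : (0:ℝ) ≤ 2),
    ← Real.rpow_neg (by norm_num : (0:ℝ) ≤ 2)]
  congr 1; ring

private lemma rho_master {H C : ℝ} (hH1 : 1/2 < H) (hH2 : H < 1) (hC : 0 < C)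
    {ρ : ℤ → ℝ}
    (hρbound : ∀ x y : ℝ, x ≠ y → ρ (⌈x⌉ - ⌈y⌉) ≤ C * |x - y| ^ (2*H - 2)) :
    ∀ x y : ℝ, ρ (⌈x⌉ - ⌈y⌉) ≤ (C * 2 ^ (2 - 2*H)) * (max 1 |x - y|) ^ (2*H - 2) := by
  intro x y
  have hz : 2*H - 2 ≤ 0 := by linarith
  by_cases hk : ⌈x⌉ = ⌈y⌉
  · have hxy : |x - y| < 1 := by
      have hd := aux_ceil_dist x y
      rw [hk, sub_self, sub_zero] at hd; exact hd
    rw [hk, sub_self]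
    rw [max_eq_left hxy.le, Real.one_rpow, mul_one]
    have h0 : ρ (⌈(1:ℝ)⌉ - ⌈(1/2:ℝ)⌉) ≤ C * |(1:ℝ) - 1/2| ^ (2*H-2) :=
      hρbound 1 (1/2) (by norm_num)
    have hc1 : ⌈(1:ℝ)⌉ = 1 := Int.ceil_one
    have hc2 : ⌈(1/2:ℝ)⌉ = 1 := aux_ceil_one (by norm_num) (by norm_num)
    rw [hc1, hc2, sub_self] at h0
    calc ρ 0 ≤ C * |(1:ℝ) - 1/2| ^ (2*H-2) := h0
      _ = C * 2 ^ (2-2*H) := by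
          rw [show |(1:ℝ)-1/2| = 1/2 by norm_num, aux_half_rpow]
  · have hk0 : ⌈x⌉ - ⌈y⌉ ≠ 0 := sub_ne_zero.mpr hk
    set k : ℤ := ⌈x⌉ - ⌈y⌉ with hkdef
    have hk1 : (1:ℝ) ≤ |(k:ℝ)| := by
      rw [← Int.cast_abs]
      exact_mod_cast Int.one_le_abs hk0
    have hM1 : (1:ℝ) ≤ max 1 |x - y| := le_max_left _ _
    have hcast : ((k:ℝ)) = (⌈x⌉:ℝ) - (⌈y⌉:ℝ) := by rw [hkdef]; push_cast; ring
    have hd := aux_ceil_dist x y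
    rw [← hcast] at hd
    have habs : |x - y| - |(k:ℝ)| ≤ |x - y - (k:ℝ)| := abs_sub_abs_le_abs_sub _ _
    have hxy2 : |x - y| ≤ 2 * |(k:ℝ)| := by linarith
    have hMk : max 1 |x - y| / 2 ≤ |(k:ℝ)| := by
      have := max_le (by linarith : (1:ℝ) ≤ 2 * |(k:ℝ)|) hxy2
      linarith
    have hρk : ρ k ≤ C * |(k:ℝ)| ^ (2*H-2) := by
      have h := hρbound ((k:ℝ)) 0 (by exact_mod_cast hk0)
      rw [Int.ceil_intCast, Int.ceil_zero, sub_zero, sub_zero] at h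
      exact h
    have hmono : |(k:ℝ)| ^ (2*H-2) ≤ (max 1 |x - y| / 2) ^ (2*H-2) :=
      Real.rpow_le_rpow_of_nonpos (by linarith) hMk hz
    have hMdiv : (max 1 |x - y| / 2) ^ (2*H-2) = 2^(2-2*H) * (max 1 |x - y|) ^ (2*H-2) := by
      rw [show max 1 |x - y| / 2 = (1/2) * max 1 |x - y| by ring,
        Real.mul_rpow (by norm_num) (by linarith : (0:ℝ) ≤ max 1 |x - y|), aux_half_rpow]
    calc ρ k ≤ C * |(k:ℝ)| ^ (2*H-2) := hρk
      _ ≤ C * ((max 1 |x - y| / 2) ^ (2*H-2)) := mul_le_mul_of_nonneg_left hmono hC.le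
      _ = (C * 2 ^ (2-2*H)) * (max 1 |x - y|) ^ (2*H-2) := by rw [hMdiv]; ring

private lemma rpow_growth {p u x : ℝ} (hu : 1 ≤ u) (h1 : u/2 ≤ x) (h2 : x ≤ Real.exp 1 * u) :
    x ^ p ≤ (2 * Real.exp 1) ^ |p| * u ^ p := by
  have hu0 : (0:ℝ) < u := by linarith
  have hx0 : (0:ℝ) < x := by linarith
  have he1 : (1:ℝ) ≤ Real.exp 1 := Real.one_le_exp (by norm_num)
  rcases le_or_gt 0 p with hp | hp
  · rw [abs_of_nonneg hp]
    calc x ^ p ≤ (Real.exp 1 * u) ^ p := Real.rpow_le_rpow hx0.le h2 hp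
      _ = Real.exp 1 ^ p * u ^ p := Real.mul_rpow (by positivity) hu0.le
      _ ≤ (2*Real.exp 1) ^ p * u ^ p := by
          have h := Real.rpow_le_rpow (by positivity : (0:ℝ) ≤ Real.exp 1)
            (by linarith : Real.exp 1 ≤ 2 * Real.exp 1) hp
          exact mul_le_mul_of_nonneg_right h (Real.rpow_nonneg hu0.le p)
  · rw [abs_of_neg hp]
    have key : x ^ p ≤ (u/2) ^ p := Real.rpow_le_rpow_of_nonpos (by linarith) h1 hp.le
    have h3 : (u/2) ^ p = u ^ p * 2 ^ (-p) := by
      rw [Real.div_rpow hu0.le (by norm_num : (0:ℝ) ≤ 2), div_eq_mul_inv,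
        ← Real.rpow_neg (by norm_num : (0:ℝ) ≤ 2)]
    have h4 : (2:ℝ) ^ (-p) ≤ (2*Real.exp 1) ^ (-p) :=
      Real.rpow_le_rpow (by norm_num) (by linarith) (by linarith)
    calc x ^ p ≤ (u/2)^p := key
      _ = u^p * 2^(-p) := h3
      _ ≤ u^p * (2*Real.exp 1)^(-p) :=
          mul_le_mul_of_nonneg_left h4 (Real.rpow_nonneg hu0.le p)
      _ = (2*Real.exp 1)^(-p) * u^p := mul_comm _ _

private lemma sigma_global {p C M : ℝ} (σ : ℕ → ℝ) (hσ1 : 0 ≤ σ 1) (hC : 0 < C)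
    (hσbound : ∀ y : ℝ, 1 ≤ y → σ (⌈y⌉.toNat) ≤ C * y ^ p) (hM : 1 ≤ M) :
    ∀ x : ℝ, 0 < x → x ≤ M → σ (⌈x⌉.toNat) ≤ σ 1 + C * (M ^ p + 1) := by
  intro x hx0 hxM
  have hMp : (0:ℝ) ≤ M ^ p := Real.rpow_nonneg (by linarith) p
  rcases le_or_gt x 1 with h1 | h1
  · rw [aux_ceil_one hx0 h1]
    simp only [Int.toNat_one]
    nlinarith
  · have hb := hσbound x h1.le
    have hxp : x ^ p ≤ M ^ p + 1 := by
      rcases le_or_gt 0 p with hp | hp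
      · have hle : x ^ p ≤ M ^ p := Real.rpow_le_rpow (by linarith) hxM hp
        linarith
      · have hle : x ^ p ≤ 1 := Real.rpow_le_one_of_one_le_of_nonpos h1.le hp.le
        linarith
    nlinarith

private lemma aux_exp_lin {τ : ℝ} (hτ0 : 0 ≤ τ) (hτ1 : τ ≤ 1) :
    Real.exp τ - 1 ≤ Real.exp 1 * τ := by
  have h1 := Real.add_one_le_exp (-τ)
  have h2 : Real.exp (-τ) = (Real.exp τ)⁻¹ := Real.exp_neg τ
  have h3 : (0:ℝ) < Real.exp τ := Real.exp_pos τ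
  have h4 : Real.exp τ ≤ Real.exp 1 := Real.exp_le_exp.mpr hτ1
  have h5 : Real.exp τ - 1 ≤ τ * Real.exp τ := by
    have hle : (1 - τ) * Real.exp τ ≤ 1 := by
      calc (1-τ)*Real.exp τ ≤ (Real.exp τ)⁻¹ * Real.exp τ := by
            refine mul_le_mul_of_nonneg_right ?_ h3.le
            rw [← h2]; linarith
        _ = 1 := inv_mul_cancel₀ h3.ne'
    nlinarith
  nlinarith [mul_le_mul_of_nonneg_left h4 hτ0]

set_option maxHeartbeats 1000000 in
theorem stmt_16 (p H : ℝ) (hH1 : 1/2 < H) (hH2 : H < 1) (hpH : 0 < p + H)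
    (C : ℝ) (hC : 0 < C) (σ : ℕ → ℝ) (ρ : ℤ → ℝ)
    (hσpos : ∀ i, 0 < σ i)
    (hρnonneg : ∀ i : ℤ, 0 ≤ ρ i) (hρeven : ∀ i : ℤ, ρ (-i) = ρ i)
    (hσbound : ∀ y : ℝ, 1 ≤ y → σ (⌈y⌉.toNat) ≤ C * y ^ p)
    (hρbound : ∀ x y : ℝ, x ≠ y → ρ (⌈x⌉ - ⌈y⌉) ≤ C * |x - y| ^ (2*H - 2)) :
    ∃ C' : ℝ, ∀ u : ℝ, 1 ≤ u → ∀ τ : ℝ, 0 ≤ τ → τ ≤ 1 →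
      Fcov σ ρ (u * Real.exp τ) (u * Real.exp τ) - Fcov σ ρ u (u * Real.exp τ)
        ≤ C' * u ^ (2*p + 2*H) * τ := by
  have hσ1 := hσpos 1
  have hd0 : (0:ℝ) < 2*H - 1 := by linarith
  have hp1 : (0:ℝ) < p + 1 := by linarith
  have he1 : (1:ℝ) ≤ Real.exp 1 := Real.one_le_exp (by norm_num)
  have he0 : (0:ℝ) < Real.exp 1 := Real.exp_pos 1
  have h2H : (0:ℝ) < (2:ℝ) ^ (2-2*H) := Real.rpow_pos_of_pos two_pos _
  set D : ℝ := C * 2 ^ (2 - 2*H) with hDdef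
  have hD0 : 0 < D := by rw [hDdef]; positivity
  set Ep : ℝ := (2 * Real.exp 1) ^ |p| with hEpdef
  have hEp0 : 0 < Ep := by rw [hEpdef]; positivity
  set K3 : ℝ := 2 * (1 + Real.exp 1 / (2*H - 1)) with hK3def
  have hK30 : 0 < K3 := by
    have h := div_pos he0 hd0
    rw [hK3def]; linarith
  set B1 : ℝ := C * Ep * σ 1 * D * 2 ^ (2 - 2*H) with hB1def
  set B2 : ℝ := C * Ep * C * D * 2 ^ (2 - 2*H) / (p + 1) with hB2def
  set B3 : ℝ := C * Ep * C * Ep * D * K3 with hB3def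
  have hB10 : 0 < B1 := by
    rw [hB1def]; exact mul_pos (mul_pos (mul_pos (mul_pos hC hEp0) hσ1) hD0) h2H
  have hB20 : 0 < B2 := by
    rw [hB2def]; exact div_pos (mul_pos (mul_pos (mul_pos (mul_pos hC hEp0) hC) hD0) h2H) hp1
  have hB30 : 0 < B3 := by
    rw [hB3def]
    exact mul_pos (mul_pos (mul_pos (mul_pos (mul_pos hC hEp0) hC) hEp0) hD0) hK30
  refine ⟨(B1 + B2 + B3) * Real.exp 1, ?_⟩
  intro u hu τ hτ0 hτ1
  have hu0 : (0:ℝ) < u := by linarith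
  set L : ℝ := u * Real.exp τ with hLdef
  have hexpτ1 : (1:ℝ) ≤ Real.exp τ := Real.one_le_exp hτ0
  have hexpτe : Real.exp τ ≤ Real.exp 1 := Real.exp_le_exp.mpr hτ1
  have hL1 : (1:ℝ) ≤ L := by rw [hLdef]; nlinarith
  have huL : u ≤ L := by rw [hLdef]; nlinarith
  have hLe : L ≤ Real.exp 1 * u := by rw [hLdef]; nlinarith
  have hL0 : (0:ℝ) < L := by linarith
  set f : ℝ → ℝ → ℝ := fun x y => σ (⌈x⌉.toNat) * σ (⌈y⌉.toNat) * ρ (⌈x⌉ - ⌈y⌉) with hfdef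
  set G : ℝ → ℝ := fun x => ∫ y in Ioo (0:ℝ) L, f x y with hGdef
  have hFL : Fcov σ ρ L L = ∫ x in Ioo (0:ℝ) L, G x := rfl
  have hFu : Fcov σ ρ u L = ∫ x in Ioo (0:ℝ) u, G x := rfl
  have hf0 : ∀ x y, 0 ≤ f x y := fun x y =>
    mul_nonneg (mul_nonneg (hσpos _).le (hσpos _).le) (hρnonneg _)
  have hG0 : ∀ x, 0 ≤ G x := fun x =>
    setIntegral_nonneg measurableSet_Ioo (fun y _ => hf0 x y)
  -- measurability
  have mσc : Measurable fun x : ℝ => σ (⌈x⌉.toNat) :=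
    (measurable_of_countable (fun k : ℤ => σ k.toNat)).comp Int.measurable_ceil
  have mf : Measurable fun q : ℝ × ℝ => f q.1 q.2 := by
    refine Measurable.mul (Measurable.mul ?_ ?_) ?_
    · exact mσc.comp measurable_fst
    · exact mσc.comp measurable_snd
    · exact (measurable_of_countable ρ).comp
        ((Int.measurable_ceil.comp measurable_fst).sub (Int.measurable_ceil.comp measurable_snd))
  have mfy : ∀ x, Measurable fun y => f x y := fun x => mf.comp measurable_prodMk_left
  have hGsm : StronglyMeasurable G := mf.stronglyMeasurable.integral_prod_right'
  -- ρ bounds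
  have hρM : ∀ x y : ℝ, ρ (⌈x⌉ - ⌈y⌉) ≤ D * (max 1 |x - y|) ^ (2*H-2) := by
    intro x y; rw [hDdef]; exact rho_master hH1 hH2 hC hρbound x y
  have hρD : ∀ x y : ℝ, ρ (⌈x⌉ - ⌈y⌉) ≤ D := by
    intro x y
    refine (hρM x y).trans ?_
    have h := Real.rpow_le_one_of_one_le_of_nonpos (le_max_left 1 |x - y|)
      (by linarith : 2*H-2 ≤ 0)
    nlinarith
  -- σ bound on (0, L]
  set Mσ : ℝ := σ 1 + C * (L ^ p + 1) with hMσdef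
  have hMσ : ∀ x : ℝ, 0 < x → x ≤ L → σ (⌈x⌉.toNat) ≤ Mσ := by
    intro x h0 h1; rw [hMσdef]; exact sigma_global σ hσ1.le hC hσbound hL1 x h0 h1
  -- inner integrability
  have hIntInner : ∀ x : ℝ, 0 < x → x ≤ L → IntegrableOn (fun y => f x y) (Ioo (0:ℝ) L) := by
    intro x hx0 hxL
    apply Measure.integrableOn_of_bounded (M := Mσ * Mσ * D) measure_Ioo_lt_top.ne
      (mfy x).aestronglyMeasurable
    filter_upwards [ae_restrict_mem measurableSet_Ioo] with y hy
    rw [Real.norm_eq_abs, abs_of_nonneg (hf0 x y)]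
    exact aux_mul3 _ _ _ _ _ _ (hσpos _).le (hσpos _).le (hρnonneg _)
      (hMσ x hx0 hxL) (hMσ y hy.1 hy.2.le) (hρD x y)
  -- G bounded, integrable
  have hGbd : ∀ x : ℝ, 0 < x → x ≤ L →
      G x ≤ (Mσ * Mσ * D) * (volume (Ioo (0:ℝ) L)).toReal := by
    intro x hx0 hxL
    have hn : ‖∫ y in Ioo (0:ℝ) L, f x y‖ ≤ (Mσ * Mσ * D) * (volume (Ioo (0:ℝ) L)).toReal := by
      apply norm_setIntegral_le_of_norm_le_const measure_Ioo_lt_top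
      intro y hy
      rw [Real.norm_eq_abs, abs_of_nonneg (hf0 x y)]
      exact aux_mul3 _ _ _ _ _ _ (hσpos _).le (hσpos _).le (hρnonneg _)
        (hMσ x hx0 hxL) (hMσ y hy.1 hy.2.le) (hρD x y)
    rw [Real.norm_eq_abs] at hn
    exact le_trans (le_abs_self _) hn
  have hGInt : IntegrableOn G (Ioo (0:ℝ) L) := by
    apply Measure.integrableOn_of_bounded
      (M := (Mσ * Mσ * D) * (volume (Ioo (0:ℝ) L)).toReal) measure_Ioo_lt_top.ne
      hGsm.aestronglyMeasurable
    filter_upwards [ae_restrict_mem measurableSet_Ioo] with x hx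
    rw [Real.norm_eq_abs, abs_of_nonneg (hG0 x)]
    exact hGbd x hx.1 hx.2.le
  -- outer split
  have hsplitO : ∫ x in Ioo (0:ℝ) L, G x
      = (∫ x in Ioo (0:ℝ) u, G x) + ∫ x in Ico u L, G x := by
    rw [← Ioo_union_Ico_eq_Ioo hu0 huL]
    exact setIntegral_union
      (by rw [Set.disjoint_left]; intro a ha hb; exact absurd hb.1 (not_le.mpr ha.2))
      measurableSet_Ico
      (hGInt.mono_set (fun a ha => ⟨ha.1, lt_of_lt_of_le ha.2 huL⟩))
      (hGInt.mono_set (fun a ha => ⟨lt_of_lt_of_le hu0 ha.1, ha.2⟩))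
  -- m and g
  set m : ℝ := max 1 (u/2) with hmdef
  have hm1 : (1:ℝ) ≤ m := le_max_left _ _
  have hmu : m ≤ u := max_le hu (by linarith)
  have hmL : m ≤ L := le_trans hmu huL
  have hmhalf : u/2 ≤ m := le_max_right _ _
  set g : ℝ → ℝ := fun t => (max 1 |t|) ^ (2*H-2) with hgdef
  have hgc : Continuous g := by
    apply Continuous.rpow_const (continuous_const.max continuous_abs)
    intro t
    exact Or.inl (ne_of_gt (lt_of_lt_of_le one_pos (le_max_left _ _)))
  have hg0 : ∀ t, 0 ≤ g t := fun t =>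
    Real.rpow_nonneg (le_trans zero_le_one (le_max_left _ _)) _
  -- interval integral of g
  have hgL : ∫ t in (-L)..L, g t ≤ K3 * u ^ (2*H-1) := by
    have hInt : ∀ a b : ℝ, IntervalIntegrable g volume a b :=
      fun a b => hgc.intervalIntegrable a b
    have e01 : ∫ t in (0:ℝ)..1, g t = 1 := by
      have heq : EqOn g (fun _ => (1:ℝ)) (uIcc (0:ℝ) 1) := by
        intro t ht
        rw [uIcc_of_le (by norm_num : (0:ℝ) ≤ 1)] at ht
        have habs : |t| ≤ 1 := abs_le.mpr ⟨by linarith [ht.1], ht.2⟩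
        simp only [hgdef]
        rw [max_eq_left habs, Real.one_rpow]
      rw [intervalIntegral.integral_congr heq]
      simp
    have e1L : ∫ t in (1:ℝ)..L, g t = (L^(2*H-1) - 1)/(2*H-1) := by
      have heq : EqOn g (fun t => t ^ (2*H-2)) (uIcc (1:ℝ) L) := by
        intro t ht
        rw [uIcc_of_le hL1] at ht
        have h1t : (1:ℝ) ≤ t := ht.1
        simp only [hgdef]
        rw [abs_of_nonneg (by linarith), max_eq_right h1t]
      rw [intervalIntegral.integral_congr heq,
        integral_rpow (Or.inl (by linarith : (-1:ℝ) < 2*H-2)),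
        Real.one_rpow, show 2*H-2+1 = 2*H-1 by ring]
    have eneg : ∫ t in (-L)..(0:ℝ), g t = ∫ t in (0:ℝ)..L, g t := by
      have heq : EqOn g (fun t => g (-t)) (uIcc (-L) (0:ℝ)) := by
        intro t _
        simp only [hgdef, abs_neg]
      rw [intervalIntegral.integral_congr heq, intervalIntegral.integral_comp_neg,
        neg_zero, neg_neg]
    have hadd1 : ∫ t in (-L)..L, g t
        = (∫ t in (-L)..(0:ℝ), g t) + ∫ t in (0:ℝ)..L, g t :=
      (intervalIntegral.integral_add_adjacent_intervals (hInt _ _) (hInt _ _)).symm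
    have hadd2 : ∫ t in (0:ℝ)..L, g t
        = (∫ t in (0:ℝ)..1, g t) + ∫ t in (1:ℝ)..L, g t :=
      (intervalIntegral.integral_add_adjacent_intervals (hInt _ _) (hInt _ _)).symm
    have hLz : L ^ (2*H-1) ≤ Real.exp 1 * u ^ (2*H-1) := by
      calc L ^ (2*H-1) ≤ (Real.exp 1 * u) ^ (2*H-1) :=
            Real.rpow_le_rpow hL0.le hLe (by linarith)
        _ = Real.exp 1 ^ (2*H-1) * u ^ (2*H-1) := Real.mul_rpow he0.le hu0.le
        _ ≤ Real.exp 1 * u ^ (2*H-1) := by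
            have h1 : Real.exp 1 ^ (2*H-1) ≤ Real.exp 1 ^ (1:ℝ) :=
              Real.rpow_le_rpow_of_exponent_le he1 (by linarith)
            rw [Real.rpow_one] at h1
            exact mul_le_mul_of_nonneg_right h1 (Real.rpow_nonneg hu0.le _)
    have hu1z : (1:ℝ) ≤ u ^ (2*H-1) := Real.one_le_rpow hu (by linarith)
    have h5 : (L^(2*H-1) - 1)/(2*H-1) ≤ Real.exp 1 * u^(2*H-1)/(2*H-1) :=
      div_le_div_of_nonneg_right (by linarith) hd0.le
    rw [hadd1, eneg, hadd2, e01, e1L, hK3def]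
    have hfield : 2 * (1 + Real.exp 1 / (2*H-1)) * u^(2*H-1)
        = 2 * u^(2*H-1) + 2 * (Real.exp 1 * u^(2*H-1)/(2*H-1)) := by
      field_simp
    rw [hfield]
    linarith
  -- main per-x bound
  have hA0 : (0:ℝ) ≤ C * Ep * u ^ p :=
    mul_nonneg (mul_nonneg hC.le hEp0.le) (Real.rpow_nonneg hu0.le p)
  have hE1 : (u/2)^(2*H-2) = 2^(2-2*H) * u^(2*H-2) := by
    rw [Real.div_rpow hu0.le (by norm_num : (0:ℝ) ≤ 2), div_eq_mul_inv,
      ← Real.rpow_neg (by norm_num : (0:ℝ) ≤ 2), show -(2*H-2) = 2-2*H by ring]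
    exact mul_comm _ _
  have hupow : u^p * u^(2*H-2) ≤ u^(2*p+2*H-1) := by
    rw [← Real.rpow_add hu0]
    exact Real.rpow_le_rpow_of_exponent_le hu (by linarith)
  have hupow2 : u^p * u^(2*H-2) * u^(p+1) = u^(2*p+2*H-1) := by
    rw [← Real.rpow_add hu0, ← Real.rpow_add hu0]
    congr 1; ring
  have hupow3 : u^p * u^p * u^(2*H-1) = u^(2*p+2*H-1) := by
    rw [← Real.rpow_add hu0, ← Real.rpow_add hu0]
    congr 1; ring
  have hGx : ∀ x, x ∈ Ico u L → G x ≤ (B1 + B2 + B3) * u ^ (2*p+2*H-1) := by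
    intro x hx
    have hxu : u ≤ x := hx.1
    have hxL : x < L := hx.2
    have hx0 : 0 < x := lt_of_lt_of_le hu0 hxu
    have hx1 : (1:ℝ) ≤ x := le_trans hu hxu
    have hσx : σ (⌈x⌉.toNat) ≤ C * Ep * u ^ p := by
      calc σ (⌈x⌉.toNat) ≤ C * x ^ p := hσbound x hx1
        _ ≤ C * (Ep * u ^ p) := by
            refine mul_le_mul_of_nonneg_left ?_ hC.le
            rw [hEpdef]
            exact rpow_growth hu (by linarith) (by linarith)
        _ = C * Ep * u ^ p := by ring
    have hInt0L : IntegrableOn (fun y => f x y) (Ioo (0:ℝ) L) := hIntInner x hx0 hxL.le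
    have hsub1 : Ioo (0:ℝ) 1 ⊆ Ioo (0:ℝ) L := Ioo_subset_Ioo_right hL1
    have hsub2 : Ico (1:ℝ) m ⊆ Ioo (0:ℝ) L :=
      fun y hy => ⟨lt_of_lt_of_le one_pos hy.1, lt_of_lt_of_le hy.2 hmL⟩
    have hsub3 : Ico m L ⊆ Ioo (0:ℝ) L :=
      fun y hy => ⟨lt_of_lt_of_le (lt_of_lt_of_le one_pos hm1) hy.1, hy.2⟩
    have hsplit : G x = (∫ y in Ioo (0:ℝ) 1, f x y)
        + ((∫ y in Ico (1:ℝ) m, f x y) + ∫ y in Ico m L, f x y) := by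
      have d1 : Disjoint (Ioo (0:ℝ) 1) (Ico (1:ℝ) L) := by
        rw [Set.disjoint_left]; intro a ha hb; exact absurd hb.1 (not_le.mpr ha.2)
      have d2 : Disjoint (Ico (1:ℝ) m) (Ico m L) := by
        rw [Set.disjoint_left]; intro a ha hb; exact absurd hb.1 (not_le.mpr ha.2)
      have hIcoL : Ico (1:ℝ) L ⊆ Ioo (0:ℝ) L :=
        fun y hy => ⟨lt_of_lt_of_le one_pos hy.1, hy.2⟩
      rw [show G x = ∫ y in Ioo (0:ℝ) L, f x y from rfl,
        ← Ioo_union_Ico_eq_Ioo (by norm_num : (0:ℝ) < 1) hL1,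
        setIntegral_union d1 measurableSet_Ico (hInt0L.mono_set hsub1)
          (hInt0L.mono_set hIcoL),
        ← Ico_union_Ico_eq_Ico hm1 hmL,
        setIntegral_union d2 measurableSet_Ico (hInt0L.mono_set hsub2)
          (hInt0L.mono_set hsub3)]
    -- piece 1
    have hI1 : (∫ y in Ioo (0:ℝ) 1, f x y) ≤ B1 * u ^ (2*p+2*H-1) := by
      have hb : ∀ y ∈ Ioo (0:ℝ) 1,
          f x y ≤ (C * Ep * u^p) * σ 1 * (D * (u/2)^(2*H-2)) := by
        intro y hy
        have hmax1 : u/2 ≤ max 1 |x - y| := by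
          rcases le_or_gt u 2 with h | h
          · exact le_trans (by linarith) (le_max_left _ _)
          · have h2 : x - y ≤ |x - y| := le_abs_self _
            have h3 : u - 1 ≤ x - y := by
              have := hy.2; linarith
            exact le_trans (by linarith) (le_max_right _ _)
        have hρ1 : ρ (⌈x⌉ - ⌈y⌉) ≤ D * (u/2) ^ (2*H-2) :=
          (hρM x y).trans (mul_le_mul_of_nonneg_left
            (Real.rpow_le_rpow_of_nonpos (by linarith) hmax1 (by linarith)) hD0.le)
        have hσy1 : σ (⌈y⌉.toNat) = σ 1 := by
          rw [aux_ceil_one hy.1 hy.2.le, Int.toNat_one]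
        exact aux_mul3 _ _ _ _ _ _ (hσpos _).le (hσpos _).le (hρnonneg _)
          hσx (le_of_eq hσy1) hρ1
      calc (∫ y in Ioo (0:ℝ) 1, f x y)
          ≤ ∫ _y in Ioo (0:ℝ) 1, ((C * Ep * u^p) * σ 1 * (D * (u/2)^(2*H-2))) :=
            setIntegral_mono_on (hInt0L.mono_set hsub1)
              (integrableOn_const measure_Ioo_lt_top.ne) measurableSet_Ioo hb
        _ = (C * Ep * u^p) * σ 1 * (D * (u/2)^(2*H-2)) := by
            rw [setIntegral_const, Real.volume_real_Ioo]
            norm_num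
        _ ≤ B1 * u ^ (2*p+2*H-1) := by
            rw [hB1def, hE1]
            calc (C * Ep * u^p) * σ 1 * (D * (2^(2-2*H) * u^(2*H-2)))
                = (C * Ep * σ 1 * D * 2^(2-2*H)) * (u^p * u^(2*H-2)) := by ring
              _ ≤ (C * Ep * σ 1 * D * 2^(2-2*H)) * u^(2*p+2*H-1) := by
                  refine mul_le_mul_of_nonneg_left hupow ?_
                  exact mul_nonneg (mul_nonneg (mul_nonneg
                    (mul_nonneg hC.le hEp0.le) hσ1.le) hD0.le) h2H.le
    -- piece 2
    have hI2 : (∫ y in Ico (1:ℝ) m, f x y) ≤ B2 * u ^ (2*p+2*H-1) := by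
      have hbnd : ∀ y ∈ Ico (1:ℝ) m,
          f x y ≤ ((C*Ep*u^p) * C * (D*(u/2)^(2*H-2))) * y^p := by
        intro y hy
        have hy1 : (1:ℝ) ≤ y := hy.1
        have hym : y < m := hy.2
        have hu2 : 1 < u/2 := by
          by_contra hcon
          push_neg at hcon
          rw [hmdef, max_eq_left hcon] at hym
          exact absurd hy1 (not_le.mpr hym)
        have hym2 : y < u/2 := by rwa [hmdef, max_eq_right hu2.le] at hym
        have hmaxy : u/2 ≤ max 1 |x - y| := by
          have h2 : x - y ≤ |x - y| := le_abs_self _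
          exact le_trans (by linarith) (le_max_right _ _)
        have hρy : ρ (⌈x⌉-⌈y⌉) ≤ D * (u/2)^(2*H-2) :=
          (hρM x y).trans (mul_le_mul_of_nonneg_left
            (Real.rpow_le_rpow_of_nonpos (by linarith) hmaxy (by linarith)) hD0.le)
        calc f x y ≤ (C*Ep*u^p) * (C*y^p) * (D*(u/2)^(2*H-2)) :=
              aux_mul3 _ _ _ _ _ _ (hσpos _).le (hσpos _).le (hρnonneg _)
                hσx (hσbound y hy1) hρy
          _ = ((C*Ep*u^p) * C * (D*(u/2)^(2*H-2))) * y^p := by ring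
      have hrint : IntegrableOn (fun y : ℝ => y ^ p) (Ico (1:ℝ) m) := by
        have h1 : IntervalIntegrable (fun y : ℝ => y^p) volume 1 m :=
          intervalIntegral.intervalIntegrable_rpow' (by linarith)
        have h2 : IntegrableOn (fun y : ℝ => y^p) (Ioc (1:ℝ) m) :=
          (intervalIntegrable_iff_integrableOn_Ioc_of_le hm1).mp h1
        exact (integrableOn_Ico_iff_integrableOn_Ioo (a := (1:ℝ)) (b := m)).mpr (h2.mono_set Ioo_subset_Ioc_self)
      have hrval : (∫ y in Ico (1:ℝ) m, (y:ℝ)^p) ≤ u^(p+1)/(p+1) := by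
        rw [integral_Ico_eq_integral_Ioo, ← integral_Ioc_eq_integral_Ioo,
          ← intervalIntegral.integral_of_le hm1,
          integral_rpow (Or.inl (by linarith : (-1:ℝ) < p)), Real.one_rpow]
        have hm' : m^(p+1) ≤ u^(p+1) :=
          Real.rpow_le_rpow (by linarith) hmu (by linarith)
        exact div_le_div_of_nonneg_right (by linarith) hp1.le
      calc (∫ y in Ico (1:ℝ) m, f x y)
          ≤ ∫ y in Ico (1:ℝ) m, ((C*Ep*u^p) * C * (D*(u/2)^(2*H-2))) * y^p :=
            setIntegral_mono_on (hInt0L.mono_set hsub2) (hrint.const_mul _)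
              measurableSet_Ico hbnd
        _ = ((C*Ep*u^p) * C * (D*(u/2)^(2*H-2))) * ∫ y in Ico (1:ℝ) m, (y:ℝ)^p :=
            integral_const_mul _ _
        _ ≤ ((C*Ep*u^p) * C * (D*(u/2)^(2*H-2))) * (u^(p+1)/(p+1)) := by
            refine mul_le_mul_of_nonneg_left hrval ?_
            exact mul_nonneg (mul_nonneg hA0 hC.le)
              (mul_nonneg hD0.le (Real.rpow_nonneg (by linarith) _))
        _ ≤ B2 * u ^ (2*p+2*H-1) := by
            rw [hB2def, hE1]
            apply le_of_eq
            calc (C*Ep*u^p) * C * (D*(2^(2-2*H) * u^(2*H-2))) * (u^(p+1)/(p+1))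
                = (C * Ep * C * D * 2^(2-2*H) / (p+1)) * (u^p * u^(2*H-2) * u^(p+1)) := by
                  ring
              _ = (C * Ep * C * D * 2^(2-2*H) / (p+1)) * u^(2*p+2*H-1) := by rw [hupow2]
    -- piece 3
    have hI3 : (∫ y in Ico m L, f x y) ≤ B3 * u ^ (2*p+2*H-1) := by
      have hbnd : ∀ y ∈ Ico m L,
          f x y ≤ ((C*Ep*u^p) * (C*Ep*u^p) * D) * g (y - x) := by
        intro y hy
        have hym : m ≤ y := hy.1
        have hy1 : (1:ℝ) ≤ y := le_trans hm1 hym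
        have hσy : σ (⌈y⌉.toNat) ≤ C*Ep*u^p := by
          calc σ (⌈y⌉.toNat) ≤ C * y^p := hσbound y hy1
            _ ≤ C * (Ep * u^p) := by
                refine mul_le_mul_of_nonneg_left ?_ hC.le
                rw [hEpdef]
                exact rpow_growth hu (le_trans hmhalf hym) (by linarith [hy.2])
            _ = C*Ep*u^p := by ring
        have hρy : ρ (⌈x⌉-⌈y⌉) ≤ D * g (y - x) := by
          have h := hρM x y
          rw [abs_sub_comm x y] at h
          simpa only [hgdef] using h
        calc f x y ≤ (C*Ep*u^p) * (C*Ep*u^p) * (D * g (y-x)) :=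
              aux_mul3 _ _ _ _ _ _ (hσpos _).le (hσpos _).le (hρnonneg _) hσx hσy hρy
          _ = ((C*Ep*u^p)*(C*Ep*u^p)*D) * g (y-x) := by ring
      have hcont : Continuous fun y : ℝ => g (y - x) :=
        hgc.comp (continuous_id.sub continuous_const)
      have hgint : IntegrableOn (fun y => g (y - x)) (Ico m L) :=
        hcont.integrableOn_Icc.mono_set Ico_subset_Icc_self
      have hgbig : IntegrableOn (fun y => g (y - x)) (Ioo (x-L) (x+L)) :=
        hcont.integrableOn_Icc.mono_set Ioo_subset_Icc_self
      have hsubJ : Ico m L ⊆ Ioo (x-L) (x+L) := by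
        intro y hy
        constructor
        · have h0m : (0:ℝ) < m := lt_of_lt_of_le one_pos hm1
          have := hy.1
          linarith
        · have := hy.2
          linarith
      have hJ : (∫ y in Ico m L, g (y - x)) ≤ K3 * u^(2*H-1) := by
        have step1 : (∫ y in Ico m L, g (y - x)) ≤ ∫ y in Ioo (x-L) (x+L), g (y - x) :=
          setIntegral_mono_set hgbig (Filter.Eventually.of_forall fun y => hg0 _)
            (HasSubset.Subset.eventuallyLE hsubJ)
        have step2 : (∫ y in Ioo (x-L) (x+L), g (y - x)) = ∫ t in (-L)..L, g t := by
          rw [← integral_Ioc_eq_integral_Ioo,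
            ← intervalIntegral.integral_of_le (by linarith : x - L ≤ x + L),
            intervalIntegral.integral_comp_sub_right (fun t => g t) x]
          congr 1 <;> ring
        calc (∫ y in Ico m L, g (y-x)) ≤ ∫ y in Ioo (x-L) (x+L), g (y-x) := step1
          _ = ∫ t in (-L)..L, g t := step2
          _ ≤ K3 * u^(2*H-1) := hgL
      calc (∫ y in Ico m L, f x y)
          ≤ ∫ y in Ico m L, ((C*Ep*u^p)*(C*Ep*u^p)*D) * g (y - x) :=
            setIntegral_mono_on (hInt0L.mono_set hsub3) (hgint.const_mul _)
              measurableSet_Ico hbnd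
        _ = ((C*Ep*u^p)*(C*Ep*u^p)*D) * ∫ y in Ico m L, g (y - x) :=
            integral_const_mul _ _
        _ ≤ ((C*Ep*u^p)*(C*Ep*u^p)*D) * (K3 * u^(2*H-1)) := by
            refine mul_le_mul_of_nonneg_left hJ ?_
            exact mul_nonneg (mul_nonneg hA0 hA0) hD0.le
        _ ≤ B3 * u ^ (2*p+2*H-1) := by
            rw [hB3def]
            apply le_of_eq
            calc (C*Ep*u^p)*(C*Ep*u^p)*D * (K3 * u^(2*H-1))
                = (C*Ep*C*Ep*D*K3) * (u^p * u^p * u^(2*H-1)) := by ring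
              _ = (C*Ep*C*Ep*D*K3) * u^(2*p+2*H-1) := by rw [hupow3]
    rw [hsplit]
    calc (∫ y in Ioo (0:ℝ) 1, f x y)
        + ((∫ y in Ico (1:ℝ) m, f x y) + ∫ y in Ico m L, f x y)
        ≤ B1 * u^(2*p+2*H-1) + (B2 * u^(2*p+2*H-1) + B3 * u^(2*p+2*H-1)) :=
          add_le_add hI1 (add_le_add hI2 hI3)
      _ = (B1 + B2 + B3) * u^(2*p+2*H-1) := by ring
  -- finish
  have hBsum0 : (0:ℝ) < B1 + B2 + B3 := add_pos (add_pos hB10 hB20) hB30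
  have hBV0 : (0:ℝ) ≤ (B1+B2+B3) * u^(2*p+2*H-1) :=
    mul_nonneg hBsum0.le (Real.rpow_nonneg hu0.le _)
  have hnorm : ‖∫ x in Ico u L, G x‖
      ≤ ((B1+B2+B3) * u^(2*p+2*H-1)) * (volume (Ico u L)).toReal := by
    apply norm_setIntegral_le_of_norm_le_const measure_Ico_lt_top
    intro x hx
    rw [Real.norm_eq_abs, abs_of_nonneg (hG0 x)]
    exact hGx x hx
  have hvol : (volume (Ico u L)).toReal = L - u := by
    rw [Real.volume_Ico, ENNReal.toReal_ofReal (by linarith)]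
  have hLu : L - u ≤ u * (Real.exp 1 * τ) := by
    have h6 := mul_le_mul_of_nonneg_left (aux_exp_lin hτ0 hτ1) hu0.le
    rw [hLdef]
    linarith only [h6]
  have hVu : u^(2*p+2*H-1) * u = u^(2*p+2*H) := by
    calc u^(2*p+2*H-1) * u = u^(2*p+2*H-1) * u^(1:ℝ) := by rw [Real.rpow_one]
      _ = u^(2*p+2*H-1+1) := (Real.rpow_add hu0 _ _).symm
      _ = u^(2*p+2*H) := by norm_num
  rw [hFL, hFu, hsplitO, add_sub_cancel_left]
  calc (∫ x in Ico u L, G x) ≤ |∫ x in Ico u L, G x| := le_abs_self _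
    _ ≤ ((B1+B2+B3) * u^(2*p+2*H-1)) * (L - u) := by
        rw [← hvol]
        rw [Real.norm_eq_abs] at hnorm
        exact hnorm
    _ ≤ ((B1+B2+B3) * u^(2*p+2*H-1)) * (u * (Real.exp 1 * τ)) :=
        mul_le_mul_of_nonneg_left hLu hBV0
    _ = ((B1+B2+B3) * Real.exp 1) * (u^(2*p+2*H-1) * u) * τ := by ring
    _ = (B1+B2+B3) * Real.exp 1 * u^(2*p+2*H) * τ := by rw [hVu]
end
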